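/- arXiv:2212.05520 — 5 statements merged into one kernel-verified Lean document; each statement's English description precedes it below -/
import Mathlib

section
/- There exists an a.d.-family 𝒜 of subsets of ℕ of cardinality continuum such that the Banach space (X_𝒜, ‖·‖_{∞,2}) is nonseparable and its unit sphere is the union of countably many sets, each of diameter strictly less than 1. -/
open Set Filter Cardinal

noncomputable section

/-- The Banach space `ℓ∞` of bounded real sequences with the sup norm. -/
abbrev Linfty : Type := lp (fun _ : ℕ => ℝ) ⊤

/-- An a.d.-family: an uncountable family of infinite subsets of `ℕ` which is
pairwise almost disjoint. -/
def ADFamily (𝒜 : Set (Set ℕ)) : Prop :=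
  ¬𝒜.Countable ∧ (∀ A ∈ 𝒜, A.Infinite) ∧
    ∀ A ∈ 𝒜, ∀ B ∈ 𝒜, A ≠ B → (A ∩ B).Finite

/-- A maximal a.d.-family. -/
def MaximalADFamily (𝒜 : Set (Set ℕ)) : Prop :=
  ADFamily 𝒜 ∧ ∀ X : Set ℕ, X.Infinite → ∃ A ∈ 𝒜, (X ∩ A).Infinite

/-- `A =* B` : the symmetric difference is finite. -/
def eqStar (A B : Set ℕ) : Prop := (symmDiff A B).Finite

/-- Finite subfamilies `a`, `b` of `𝒜` represent the pair `p`. -/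
def Represents (𝒜 : Set (Set ℕ)) (p : Set ℕ × Set ℕ) (a b : Finset (Set ℕ)) : Prop :=
  ↑a ⊆ 𝒜 ∧ ↑b ⊆ 𝒜 ∧ eqStar p.1 (⋃ A ∈ a, A) ∧ eqStar p.2 (⋃ B ∈ b, B)

/-- `p` is a condition of the splitting partial order `ℙ_𝒜`. -/
def SplitCond (𝒜 : Set (Set ℕ)) (p : Set ℕ × Set ℕ) : Prop :=
  p.1 ∩ p.2 = ∅ ∧ ∃ a b : Finset (Set ℕ), Represents 𝒜 p a b

/-- `Extends p q` means `p ≤ q` in `ℙ_𝒜`. -/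
def Extends (p q : Set ℕ × Set ℕ) : Prop := q.1 ⊆ p.1 ∧ q.2 ⊆ p.2

/-- Compatibility in `ℙ_𝒜`. -/
def Compat (𝒜 : Set (Set ℕ)) (p q : Set ℕ × Set ℕ) : Prop :=
  ∃ r, SplitCond 𝒜 r ∧ Extends r p ∧ Extends r q

/-- An antichain of `ℙ_𝒜`: a set of pairwise incompatible conditions. -/
def SplitAntichain (𝒜 : Set (Set ℕ)) (P : Set (Set ℕ × Set ℕ)) : Prop :=
  (∀ p ∈ P, SplitCond 𝒜 p) ∧ ∀ p ∈ P, ∀ q ∈ P, p ≠ q → ¬Compat 𝒜 p q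

/-- `ℙ_𝒜` satisfies the countable chain condition. -/
def SplitCCC (𝒜 : Set (Set ℕ)) : Prop :=
  ∀ P : Set (Set ℕ × Set ℕ), SplitAntichain 𝒜 P → P.Countable

/-- A centered subset of `ℙ_𝒜`: every finite subset has a common lower bound in `ℙ_𝒜`. -/
def SplitCentered (𝒜 : Set (Set ℕ)) (P : Set (Set ℕ × Set ℕ)) : Prop :=
  ∀ F : Finset (Set ℕ × Set ℕ), ↑F ⊆ P →
    ∃ r, SplitCond 𝒜 r ∧ ∀ p ∈ F, Extends r p

/-- `ℙ_𝒜` is σ-centered. -/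
def SplitSigmaCentered (𝒜 : Set (Set ℕ)) : Prop :=
  ∃ P : ℕ → Set (Set ℕ × Set ℕ),
    (⋃ n, P n) = {p | SplitCond 𝒜 p} ∧ ∀ n, SplitCentered 𝒜 (P n)

/-- `ℙ_𝒜` has precaliber `κ`. -/
def SplitPrecaliber (𝒜 : Set (Set ℕ)) (κ : Cardinal) : Prop :=
  ∀ P : Set (Set ℕ × Set ℕ), (∀ p ∈ P, SplitCond 𝒜 p) → #P = κ →
    ∃ Q ⊆ P, #Q = κ ∧ SplitCentered 𝒜 Q

/-- Two conditions are essentially distinct if their (uniquely determined)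
representing finite subfamilies differ on both coordinates. -/
def EssDistinct (𝒜 : Set (Set ℕ)) (p q : Set ℕ × Set ℕ) : Prop :=
  ∀ ap bp aq bq : Finset (Set ℕ), Represents 𝒜 p ap bp → Represents 𝒜 q aq bq →
    ap ≠ aq ∧ bp ≠ bq

/-- An antiramsey a.d.-family. -/
def Antiramsey (𝒜 : Set (Set ℕ)) : Prop :=
  ADFamily 𝒜 ∧
  ∀ P : Set (Set ℕ × Set ℕ), (∀ p ∈ P, SplitCond 𝒜 p) → ¬P.Countable →
    (∀ p ∈ P, ∀ q ∈ P, p ≠ q → EssDistinct 𝒜 p q) →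
    (∃ p ∈ P, ∃ q ∈ P, p ≠ q ∧ Compat 𝒜 p q) ∧ (∃ p ∈ P, ∃ q ∈ P, ¬Compat 𝒜 p q)

/-- The first uncountable ordinal. -/
def omega1 : Ordinal.{0} := (Cardinal.aleph 1).ord

/-- A Luzin family. -/
def IsLuzinFamily (𝒜 : Set (Set ℕ)) : Prop :=
  ADFamily 𝒜 ∧ ∃ A : Ordinal.{0} → Set ℕ,
    (∀ ξ < omega1, A ξ ∈ 𝒜) ∧
    (∀ B ∈ 𝒜, ∃ ξ < omega1, A ξ = B) ∧
    (∀ ξ < omega1, ∀ η < omega1, ξ ≠ η → A ξ ≠ A η) ∧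
    ∀ η < omega1, ∀ m : ℕ, {ξ : Ordinal | ξ < η ∧ sSup (A ξ ∩ A η) = m}.Finite

/-- `(B i : i < n)` forms an `n`-Luzin gap. -/
def IsNLuzinGap (n : ℕ) (B : Fin n → Ordinal.{0} → Set ℕ) : Prop :=
  (∀ i : Fin n, ∀ α < omega1, ∀ β < omega1, α ≠ β → B i α ≠ B i β) ∧
  (∀ i j : Fin n, i ≠ j → ∀ α < omega1, ∀ β < omega1, B i α ≠ B j β) ∧
  ∃ m : ℕ,
    (∀ i j : Fin n, i < j → ∀ α < omega1, B i α ∩ B j α ⊆ Set.Iio m) ∧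
    (∀ α < omega1, ∀ β < omega1, α ≠ β →
      ¬(⋃ (i : Fin n) (j : Fin n) (_ : i ≠ j), B i α ∩ B j β) ⊆ Set.Iio m)

/-- `𝒜` contains an `n`-Luzin gap. -/
def ContainsNLuzinGap (𝒜 : Set (Set ℕ)) (n : ℕ) : Prop :=
  ∃ B : Fin n → Ordinal.{0} → Set ℕ,
    (∀ i : Fin n, ∀ α < omega1, B i α ∈ 𝒜) ∧ IsNLuzinGap n B

-- The characteristic function of `A ⊆ ℕ` as an element of `ℓ∞`.
open Classical in
def indicatorLinfty (A : Set ℕ) : Linfty :=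
  ⟨fun n => if n ∈ A then (1 : ℝ) else 0, by
    apply memℓp_infty
    refine ⟨1, ?_⟩
    rintro x ⟨n, rfl⟩
    dsimp only
    split <;> simp⟩

/-- The subset `c₀` of `ℓ∞`. -/
def c0Set : Set Linfty := {f | Tendsto (fun n => f n) atTop (nhds 0)}

/-- The Johnson–Lindenstrauss space `X_𝒜`: the closed linear span of
`c₀ ∪ {1_A : A ∈ 𝒜}` in `ℓ∞`, as a (closed) submodule. -/
def XA (𝒜 : Set (Set ℕ)) : Submodule ℝ Linfty :=
  (Submodule.span ℝ (c0Set ∪ indicatorLinfty '' 𝒜)).topologicalClosure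

/-- The norm `‖·‖_{∞,2}` on `ℓ∞`. -/
def norm12 (f : Linfty) : ℝ :=
  ‖f‖ + Real.sqrt (∑' n : ℕ, (f n) ^ 2 / 2 ^ (n + 1))

/-- The unit sphere of `(X_𝒜, ‖·‖∞)`. -/
def sphereInf (𝒜 : Set (Set ℕ)) : Set Linfty :=
  {f : Linfty | f ∈ XA 𝒜 ∧ ‖f‖ = 1}

/-- The unit sphere of `(X_𝒜, ‖·‖_{∞,2})`. -/
def sphere12 (𝒜 : Set (Set ℕ)) : Set Linfty :=
  {f : Linfty | f ∈ XA 𝒜 ∧ norm12 f = 1}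

/-- The Open Coloring Axiom. -/
def OCA : Prop :=
  ∀ (X : Type) [MetricSpace X], TopologicalSpace.SeparableSpace X →
    ∀ K : Set (X × X), IsOpen K → (∀ x y : X, (x, y) ∈ K → (y, x) ∈ K) →
      (∃ Y : Set X, ¬Y.Countable ∧ ∀ x ∈ Y, ∀ y ∈ Y, x ≠ y → (x, y) ∈ K) ∨
      (∃ C : ℕ → Set X, (⋃ n, C n) = Set.univ ∧
        ∀ n, ∀ x ∈ C n, ∀ y ∈ C n, x ≠ y → (x, y) ∉ K)

/-- An `ℝ`-embeddable a.d.-family. -/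
def REmbeddable (𝒜 : Set (Set ℕ)) : Prop :=
  ∃ (f : ℕ → ℚ) (r : Set ℕ → ℝ), Function.Injective f ∧
    (∀ A ∈ 𝒜, Irrational (r A) ∧
      ∀ ε : ℝ, 0 < ε → {n ∈ A | ε ≤ |(f n : ℝ) - r A|}.Finite) ∧
    (∀ A ∈ 𝒜, ∀ B ∈ 𝒜, A ≠ B → r A ≠ r B)

/-- The Continuum Hypothesis. -/
def CH : Prop := (Cardinal.continuum : Cardinal.{0}) = Cardinal.aleph 1

end

noncomputable section
namespace S0Aux

def qe : ℕ ≃ ℚ := (Denumerable.eqv ℚ).symm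

/-- "Record" set: indices of rationals below `x` beating all earlier rationals below `x`. -/
def Afam (x : ℝ) : Set ℕ :=
  {n | (qe n : ℝ) < x ∧ ∀ m < n, ((qe m : ℝ) < x → qe m < qe n)}

lemma Afam_exists_ge (x : ℝ) (N : ℕ) : ∃ k, N ≤ k ∧ k ∈ Afam x := by
  classical
  obtain ⟨b, hbx, hb⟩ : ∃ b : ℝ, b < x ∧ ∀ m < N, (qe m : ℝ) < x → (qe m : ℝ) ≤ b := by
    by_cases hS : ((Finset.range N).filter fun m => (qe m : ℝ) < x).Nonempty
    · refine ⟨((Finset.range N).filter fun m => (qe m : ℝ) < x).sup' hS fun m => (qe m : ℝ),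
        ?_, ?_⟩
      · rw [Finset.sup'_lt_iff]
        intro m hm
        exact (Finset.mem_filter.mp hm).2
      · intro m hm hmx
        exact Finset.le_sup' (f := fun m => (qe m : ℝ))
          (Finset.mem_filter.mpr ⟨Finset.mem_range.mpr hm, hmx⟩)
    · refine ⟨x - 1, by linarith, fun m hm hmx => absurd ?_ hS⟩
      exact ⟨m, Finset.mem_filter.mpr ⟨Finset.mem_range.mpr hm, hmx⟩⟩
  obtain ⟨p, hbp, hpx⟩ := exists_rat_btwn hbx
  have hT : ∃ m, p ≤ qe m ∧ (qe m : ℝ) < x := ⟨qe.symm p, by simp, by simp [hpx]⟩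
  set k := Nat.find hT with hkdef
  have hk := Nat.find_spec hT
  have hkA : k ∈ Afam x := by
    refine ⟨hk.2, fun m hm hmx => ?_⟩
    by_contra hcon
    push_neg at hcon
    exact Nat.find_min hT hm ⟨hk.1.trans hcon, hmx⟩
  refine ⟨k, ?_, hkA⟩
  by_contra h
  push_neg at h
  have h1 : (qe k : ℝ) ≤ b := hb k h hk.2
  have h2 : (p : ℝ) ≤ (qe k : ℝ) := by exact_mod_cast hk.1
  linarith

lemma Afam_infinite (x : ℝ) : (Afam x).Infinite := by
  refine Set.infinite_of_forall_exists_gt fun a => ?_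
  obtain ⟨k, hk, hm⟩ := Afam_exists_ge x (a + 1)
  exact ⟨k, hm, by omega⟩

lemma Afam_lt (x : ℝ) {k : ℕ} (hk : k ∈ Afam x) : (qe k : ℝ) < x := hk.1

lemma Afam_tail (x : ℝ) {ε : ℝ} (hε : 0 < ε) :
    ∃ N : ℕ, ∀ k ∈ Afam x, N ≤ k → x - ε < (qe k : ℝ) := by
  obtain ⟨p, hp1, hp2⟩ := exists_rat_btwn (show x - ε < x by linarith)
  refine ⟨qe.symm p + 1, fun k hk hNk => ?_⟩
  have hrec := hk.2 (qe.symm p) (by omega) (by simp [hp2])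
  have : (p : ℝ) < (qe k : ℝ) := by
    have := hrec
    rw [Equiv.apply_symm_apply] at this
    exact_mod_cast this
  linarith

lemma Afam_finite_far (x : ℝ) {ε : ℝ} (hε : 0 < ε) :
    {k | k ∈ Afam x ∧ ε ≤ |(qe k : ℝ) - x|}.Finite := by
  obtain ⟨N, hN⟩ := Afam_tail x hε
  refine (Set.finite_Iio N).subset fun k hk => ?_
  by_contra h
  simp only [Set.mem_Iio, not_lt] at h
  have h1 := hN k hk.1 h
  have h2 := hk.1.1
  have : |(qe k : ℝ) - x| < ε := by rw [abs_sub_lt_iff]; constructor <;> linarith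
  exact absurd hk.2 (not_le.mpr this)

lemma Afam_ad_lt {x y : ℝ} (h : x < y) : (Afam x ∩ Afam y).Finite := by
  obtain ⟨N, hN⟩ := Afam_tail y (show (0:ℝ) < y - x by linarith)
  refine (Set.finite_Iio N).subset fun k hk => ?_
  by_contra hcon
  simp only [Set.mem_Iio, not_lt] at hcon
  have h1 := hN k hk.2 hcon
  have h2 := hk.1.1
  linarith

lemma Afam_ad {x y : ℝ} (h : x ≠ y) : (Afam x ∩ Afam y).Finite := by
  rcases h.lt_or_gt with h' | h'
  · exact Afam_ad_lt h'
  · rw [Set.inter_comm]; exact Afam_ad_lt h'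

lemma Afam_injective : Function.Injective Afam := by
  intro x y hxy
  by_contra h
  wlog h' : x < y generalizing x y
  · exact this hxy.symm (Ne.symm h) ((Ne.lt_or_gt h).resolve_left h')
  obtain ⟨N, hN⟩ := Afam_tail y (show (0:ℝ) < y - x by linarith)
  obtain ⟨k, hk1, hk2⟩ := Afam_exists_ge y N
  have h1 := hN k hk2 hk1
  have h2 : k ∈ Afam x := hxy ▸ hk2
  have := h2.1
  linarith

end S0Aux
noncomputable section
namespace S0Aux

/-- The weighted `ℓ²`-type part of the `∞,2` norm. -/
def nu (f : Linfty) : ℝ := Real.sqrt (∑' n : ℕ, (f n) ^ 2 / 2 ^ (n + 1))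

lemma norm12_eq (f : Linfty) : norm12 f = ‖f‖ + nu f := rfl

lemma abs_apply_le (f : Linfty) (n : ℕ) : |f n| ≤ ‖f‖ := by
  have h := lp.norm_apply_le_norm (E := fun _ : ℕ => ℝ) ENNReal.top_ne_zero f n
  rwa [Real.norm_eq_abs] at h

lemma sq_apply_le (f : Linfty) (n : ℕ) : (f n) ^ 2 ≤ ‖f‖ ^ 2 := by
  have h := abs_apply_le f n
  have h2 := abs_le.mp h
  nlinarith [h2.1, h2.2]

lemma two_pow_succ_eq (n : ℕ) : (2 : ℝ) ^ (n + 1) = 2 * 2 ^ n := by ring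

lemma summable_div_pow (a : ℝ) : Summable (fun n : ℕ => a / 2 ^ (n + 1)) := by
  have := summable_geometric_two' a
  refine this.congr fun n => ?_
  rw [two_pow_succ_eq]
  ring

lemma tsum_div_pow (a : ℝ) : (∑' n : ℕ, a / 2 ^ (n + 1)) = a := by
  rw [show (fun n : ℕ => a / 2 ^ (n + 1)) = fun n : ℕ => a / 2 / 2 ^ n by
    funext n; rw [two_pow_succ_eq]; ring]
  exact tsum_geometric_two' a

lemma summable_sq (f : Linfty) : Summable (fun n : ℕ => (f n) ^ 2 / 2 ^ (n + 1)) := by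
  refine Summable.of_nonneg_of_le (fun n => by positivity) (fun n => ?_)
    (summable_div_pow (‖f‖ ^ 2))
  exact div_le_div_of_nonneg_right (sq_apply_le f n) (by positivity)

lemma tsum_sq_le (f : Linfty) : (∑' n : ℕ, (f n) ^ 2 / 2 ^ (n + 1)) ≤ ‖f‖ ^ 2 := by
  calc (∑' n : ℕ, (f n) ^ 2 / 2 ^ (n + 1)) ≤ (∑' n : ℕ, ‖f‖ ^ 2 / 2 ^ (n + 1)) := by
        refine Summable.tsum_le_tsum (fun n => ?_) (summable_sq f) (summable_div_pow _)
        exact div_le_div_of_nonneg_right (sq_apply_le f n) (by positivity)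
    _ = ‖f‖ ^ 2 := tsum_div_pow _

lemma nu_nonneg (f : Linfty) : 0 ≤ nu f := Real.sqrt_nonneg _

lemma nu_le_norm (f : Linfty) : nu f ≤ ‖f‖ := by
  have h := Real.sqrt_le_sqrt (tsum_sq_le f)
  rwa [Real.sqrt_sq (norm_nonneg f)] at h

lemma nu_pos (f : Linfty) (hf : f ≠ 0) : 0 < nu f := by
  have hne : ∃ k, f k ≠ 0 := by
    by_contra h
    push_neg at h
    exact hf (by ext k; simpa using h k)
  obtain ⟨k, hk⟩ := hne
  have hpos : 0 < (f k) ^ 2 / 2 ^ (k + 1) := by positivity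
  have := Summable.tsum_pos (summable_sq f) (fun n => by positivity) k hpos
  exact Real.sqrt_pos.mpr this

lemma sphere12_norm {𝒜 : Set (Set ℕ)} {x : Linfty} (hx : x ∈ sphere12 𝒜) :
    ‖x‖ = 1 - nu x := by
  have h : ‖x‖ + nu x = 1 := hx.2
  linarith

lemma sphere12_nu_le {𝒜 : Set (Set ℕ)} {x : Linfty} (hx : x ∈ sphere12 𝒜) :
    nu x ≤ 1 / 2 := by
  have h : ‖x‖ + nu x = 1 := hx.2
  have := nu_le_norm x
  linarith

lemma sphere12_norm_le_one {𝒜 : Set (Set ℕ)} {x : Linfty} (hx : x ∈ sphere12 𝒜) :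
    ‖x‖ ≤ 1 := by
  have h : ‖x‖ + nu x = 1 := hx.2
  have := nu_nonneg x
  linarith

lemma nu_zero : nu (0 : Linfty) = 0 := by
  rw [nu, show (fun n : ℕ => (((0 : Linfty)) n) ^ 2 / 2 ^ (n + 1)) = fun _ : ℕ => (0 : ℝ) from
    funext fun n => by simp [lp.coeFn_zero], tsum_zero, Real.sqrt_zero]

lemma sphere12_nu_pos {𝒜 : Set (Set ℕ)} {x : Linfty} (hx : x ∈ sphere12 𝒜) :
    0 < nu x := by
  refine nu_pos x fun h0 => ?_
  have h : ‖x‖ + nu x = 1 := hx.2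
  rw [h0, nu_zero, norm_zero] at h
  norm_num at h

lemma tendsto_of_mem_span_c0 {y : Linfty} (hy : y ∈ Submodule.span ℝ c0Set) :
    Tendsto (fun n => y n) atTop (nhds 0) := by
  induction hy using Submodule.span_induction with
  | mem z hz => exact hz
  | zero => simpa [lp.coeFn_zero] using (tendsto_const_nhds : Tendsto (fun _ : ℕ => (0:ℝ)) atTop _)
  | add u v hu hv hu' hv' => simpa [lp.coeFn_add] using hu'.add hv'
  | smul a u hu hu' => simpa [lp.coeFn_smul, smul_eq_mul] using hu'.const_mul a

lemma coe_sum_apply {ι : Type*} (s : Finset ι) (f : ι → Linfty) (k : ℕ) :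
    (((∑ v ∈ s, f v) : Linfty) : ℕ → ℝ) k = ∑ v ∈ s, (f v) k := by
  rw [lp.coeFn_sum]
  simp

end S0Aux
end
noncomputable section
namespace S0Aux

/-- Index data for a piece of the sphere covering: a rational `ρ` (lower bound for `nu`),
a list of rationals (head approximation), and a finite set of (center, radius, value)
triples of rationals describing intervals and asymptotic values. -/
abbrev PIdx : Type := ℚ × List ℚ × Finset (ℚ × ℚ × ℚ)

/-- One piece of the covering of the sphere. -/
def piece (𝒜 : Set (Set ℕ)) (t : PIdx) : Set Linfty :=
  {x | x ∈ sphere12 𝒜 ∧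
    (t.1 : ℝ) ≤ nu x ∧ (t.1 : ℝ) ≤ 1 / 2 ∧
    ((1 : ℝ) / 2) ^ t.2.1.length ≤ ((t.1 : ℝ) / 8) ^ 2 ∧
    (∀ k (h : k < t.2.1.length), |x k - (t.2.1.get ⟨k, h⟩ : ℝ)| ≤ (t.1 : ℝ) / 8) ∧
    (∀ u ∈ t.2.2, ∀ u' ∈ t.2.2, u ≠ u' →
      ∀ p : ℚ, ¬(|p - u.1| < u.2.1 ∧ |p - u'.1| < u'.2.1)) ∧
    (∀ k, t.2.1.length ≤ k → (t.1 : ℝ) / 8 < |x k| →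
      ∃ u ∈ t.2.2, |qe k - u.1| < u.2.1 ∧ |x k - (u.2.2 : ℝ)| ≤ (t.1 : ℝ) / 8)}

lemma piece_diam (𝒜 : Set (Set ℕ)) (t : PIdx) (ht : 0 < t.1) :
    ∀ x ∈ piece 𝒜 t, ∀ y ∈ piece 𝒜 t, norm12 (x - y) ≤ 1 - (t.1 : ℝ) / 2 := by
  intro x hx y hy
  obtain ⟨hxs, hxρ, hρhalf, hpow, hxhead, hdisj, hxtail⟩ := hx
  obtain ⟨hys, hyρ, -, -, hyhead, -, hytail⟩ := hy
  set ρ : ℝ := (t.1 : ℝ) with hρdef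
  set δ : ℝ := ρ / 8 with hδdef
  set n : ℕ := t.2.1.length with hndef
  have hρpos : 0 < ρ := by rw [hρdef]; exact_mod_cast ht
  have hδpos : 0 < δ := by positivity
  -- coordinatewise bounds
  have hxb : ∀ k, |x k| ≤ 1 - ρ := fun k => by
    have h1 := abs_apply_le x k
    have h2 := sphere12_norm hxs
    linarith
  have hyb : ∀ k, |y k| ≤ 1 - ρ := fun k => by
    have h1 := abs_apply_le y k
    have h2 := sphere12_norm hys
    linarith
  have hxb1 : ∀ k, |x k| ≤ 1 := fun k =>
    (abs_apply_le x k).trans (sphere12_norm_le_one hxs)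
  have hyb1 : ∀ k, |y k| ≤ 1 := fun k =>
    (abs_apply_le y k).trans (sphere12_norm_le_one hys)
  have hcoord : ∀ k, |x k - y k| ≤ 1 - ρ + δ := by
    intro k
    rcases lt_or_ge k n with hk | hk
    · have h1 := hxhead k hk
      have h2 := hyhead k hk
      have h3 : |x k - y k| ≤ |x k - (t.2.1.get ⟨k, hk⟩ : ℝ)| + |(t.2.1.get ⟨k, hk⟩ : ℝ) - y k| :=
        abs_sub_le _ _ _
      rw [abs_sub_comm] at h2
      linarith
    · by_cases h1 : δ < |x k| <;> by_cases h2 : δ < |y k|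
      · obtain ⟨u, hu, huq, huv⟩ := hxtail k hk h1
        obtain ⟨u', hu', huq', huv'⟩ := hytail k hk h2
        by_cases huu : u = u'
        · subst huu
          have h3 : |x k - y k| ≤ |x k - (u.2.2 : ℝ)| + |(u.2.2 : ℝ) - y k| := abs_sub_le _ _ _
          rw [abs_sub_comm] at huv'
          linarith
        · exact absurd ⟨huq, huq'⟩ (hdisj u hu u' hu' huu (qe k))
      · push_neg at h2
        have h3 : |x k - y k| ≤ |x k| + |y k| := abs_sub _ _
        have := hxb k
        linarith
      · push_neg at h1
        have h3 : |x k - y k| ≤ |x k| + |y k| := abs_sub _ _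
        have := hyb k
        linarith
      · push_neg at h1 h2
        have h3 : |x k - y k| ≤ |x k| + |y k| := abs_sub _ _
        linarith
  have hcoord2 : ∀ k, |x k - y k| ≤ 2 := by
    intro k
    have h3 : |x k - y k| ≤ |x k| + |y k| := abs_sub _ _
    have := hxb1 k
    have := hyb1 k
    linarith
  have hsub : ∀ k, ((x - y : Linfty)) k = x k - y k := fun k => by
    rw [lp.coeFn_sub]; rfl
  have hnorm : ‖x - y‖ ≤ 1 - ρ + δ := by
    refine lp.norm_le_of_forall_le (by linarith [hρhalf]) fun k => ?_
    rw [Real.norm_eq_abs, hsub k]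
    exact hcoord k
  -- the weighted ℓ² part
  set g : ℕ → ℝ := fun k => (((x - y : Linfty)) k) ^ 2 / 2 ^ (k + 1) with hgdef
  have hg : Summable g := summable_sq (x - y)
  have hgnn : ∀ k, 0 ≤ g k := fun k => by positivity
  have hsplit := Summable.sum_add_tsum_nat_add (f := g) n hg
  have hhead : ∑ i ∈ Finset.range n, g i ≤ 4 * δ ^ 2 := by
    have h1 : ∀ i ∈ Finset.range n, g i ≤ (4 * δ ^ 2) / 2 ^ (i + 1) := by
      intro i hi
      have hi' : i < n := Finset.mem_range.mp hi
      have hb : |x i - y i| ≤ 2 * δ := by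
        have h1 := hxhead i hi'
        have h2 := hyhead i hi'
        have h3 : |x i - y i| ≤ |x i - (t.2.1.get ⟨i, hi'⟩ : ℝ)| +
            |(t.2.1.get ⟨i, hi'⟩ : ℝ) - y i| := abs_sub_le _ _ _
        rw [abs_sub_comm] at h2
        linarith
      have hsq : (x i - y i) ^ 2 ≤ 4 * δ ^ 2 := by
        have := abs_nonneg (x i - y i)
        nlinarith [sq_abs (x i - y i)]
      rw [hgdef]
      simp only [hsub i]
      exact div_le_div_of_nonneg_right hsq (by positivity)
    calc ∑ i ∈ Finset.range n, g i ≤ ∑ i ∈ Finset.range n, (4 * δ ^ 2) / 2 ^ (i + 1) :=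
          Finset.sum_le_sum h1
      _ ≤ ∑' i : ℕ, (4 * δ ^ 2) / 2 ^ (i + 1) :=
          Summable.sum_le_tsum _ (fun i _ => by positivity) (summable_div_pow _)
      _ = 4 * δ ^ 2 := tsum_div_pow _
  have htail : (∑' i : ℕ, g (i + n)) ≤ 4 * δ ^ 2 := by
    have hshift : Summable fun i => g (i + n) := (summable_nat_add_iff n).mpr hg
    have hbound : ∀ i : ℕ, g (i + n) ≤ (4 * ((1:ℝ)/2) ^ n) / 2 ^ (i + 1) := by
      intro i
      have hsq : (x (i + n) - y (i + n)) ^ 2 ≤ 4 := by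
        have h := hcoord2 (i + n)
        nlinarith [sq_abs (x (i + n) - y (i + n)), abs_nonneg (x (i + n) - y (i + n))]
      have hpow2 : (2:ℝ) ^ ((i + n) + 1) = 2 ^ n * 2 ^ (i + 1) := by
        rw [← pow_add]; ring_nf
      have h12 : ((1:ℝ)/2) ^ n = 1 / 2 ^ n := by
        rw [div_pow, one_pow]
      have key : (4:ℝ) / 2 ^ ((i + n) + 1) = (4 * ((1:ℝ)/2) ^ n) / 2 ^ (i + 1) := by
        rw [hpow2, h12]
        have h2n : (0:ℝ) < 2 ^ n := by positivity
        have h2i : (0:ℝ) < 2 ^ (i + 1) := by positivity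
        field_simp
      calc g (i + n) = (x (i + n) - y (i + n)) ^ 2 / 2 ^ ((i + n) + 1) := by
            rw [hgdef]; simp only [hsub (i + n)]
        _ ≤ 4 / 2 ^ ((i + n) + 1) := div_le_div_of_nonneg_right hsq (by positivity)
        _ = (4 * ((1:ℝ)/2) ^ n) / 2 ^ (i + 1) := key
    calc (∑' i : ℕ, g (i + n)) ≤ ∑' i : ℕ, (4 * ((1:ℝ)/2) ^ n) / 2 ^ (i + 1) :=
          Summable.tsum_le_tsum hbound hshift (summable_div_pow _)
      _ = 4 * ((1:ℝ)/2) ^ n := tsum_div_pow _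
      _ ≤ 4 * δ ^ 2 := by nlinarith [hpow]
  have hS : (∑' k : ℕ, g k) ≤ (3 * δ) ^ 2 := by
    have : (∑' k : ℕ, g k) ≤ 8 * δ ^ 2 := by
      rw [← hsplit]
      linarith
    nlinarith [hδpos]
  have hnu : nu (x - y) ≤ 3 * δ := by
    have h1 : nu (x - y) = Real.sqrt (∑' k : ℕ, g k) := rfl
    rw [h1]
    have h2 := Real.sqrt_le_sqrt hS
    rwa [Real.sqrt_sq (by positivity)] at h2
  have : norm12 (x - y) = ‖x - y‖ + nu (x - y) := rfl
  rw [this]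
  rw [hδdef] at hnu hnorm
  linarith

end S0Aux
end
noncomputable section
namespace S0Aux

open Classical in
lemma indicator_apply (A : Set ℕ) (n : ℕ) :
    (indicatorLinfty A) n = if n ∈ A then (1:ℝ) else 0 := rfl

/-- The a.d. family used in the construction. -/
def Bfam : Set (Set ℕ) := Set.range Afam

lemma coverage {x : Linfty} (hx : x ∈ sphere12 Bfam) :
    ∃ t : PIdx, 0 < t.1 ∧ x ∈ piece Bfam t := by
  classical
  have hnupos := sphere12_nu_pos hx
  have hnuhalf := sphere12_nu_le hx
  obtain ⟨ρ, hρ0, hρnu⟩ := exists_rat_btwn hnupos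
  have hρpos : 0 < ρ := by exact_mod_cast hρ0
  set δ : ℝ := (ρ : ℝ) / 8 with hδdef
  have hδpos : 0 < δ := by positivity
  -- approximate x by an element of the span
  have hxcl : x ∈ closure ((Submodule.span ℝ (c0Set ∪ indicatorLinfty '' Bfam)) : Set Linfty) := by
    have := hx.1
    rw [XA, ← Submodule.topologicalClosure_coe] at *
    exact this
  obtain ⟨z, hzmem, hzx⟩ := Metric.mem_closure_iff.mp hxcl (δ / 4) (by positivity)
  rw [dist_eq_norm] at hzx
  rw [SetLike.mem_coe, Submodule.span_union] at hzmem
  obtain ⟨y, hy, w, hw, hyw⟩ := Submodule.mem_sup.mp hzmem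
  obtain ⟨c, hcsupp, hcw⟩ := Submodule.mem_span_set.mp hw
  set s : Finset Linfty := c.support with hsdef
  -- choose reals for the members of the support
  have hch : ∀ v ∈ s, ∃ ξv : ℝ, indicatorLinfty (Afam ξv) = v := by
    intro v hv
    obtain ⟨B, hB, hBv⟩ := hcsupp hv
    obtain ⟨ξv, rfl⟩ := hB
    exact ⟨ξv, hBv⟩
  choose! ξ hξ using hch
  have hξinj : ∀ v ∈ s, ∀ v' ∈ s, v ≠ v' → ξ v ≠ ξ v' := by
    intro v hv v' hv' hne heq
    exact hne (by rw [← hξ v hv, ← hξ v' hv', heq])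
  -- a positive separation of the reals
  obtain ⟨θ₀, hθ₀pos, hsep⟩ :
      ∃ θ₀ : ℝ, 0 < θ₀ ∧ ∀ v ∈ s, ∀ v' ∈ s, v ≠ v' → 3 * θ₀ ≤ |ξ v - ξ v'| := by
    set P := (s ×ˢ s).filter (fun p => p.1 ≠ p.2) with hPdef
    by_cases hP : P.Nonempty
    · refine ⟨(P.inf' hP fun p => |ξ p.1 - ξ p.2|) / 3, ?_, ?_⟩
      · have h1 : ∀ p ∈ P, 0 < |ξ p.1 - ξ p.2| := by
          intro p hp
          have hmem := Finset.mem_filter.mp hp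
          have h12 := Finset.mem_product.mp hmem.1
          exact abs_pos.mpr (sub_ne_zero.mpr (hξinj _ h12.1 _ h12.2 hmem.2))
        have h2 : 0 < P.inf' hP fun p => |ξ p.1 - ξ p.2| := by
          rw [Finset.lt_inf'_iff]
          exact h1
        linarith
      · intro v hv v' hv' hne
        have hp : (v, v') ∈ P := by
          rw [hPdef, Finset.mem_filter, Finset.mem_product]
          exact ⟨⟨hv, hv'⟩, hne⟩
        have := Finset.inf'_le (fun p => |ξ p.1 - ξ p.2|) hp
        linarith
    · refine ⟨1, one_pos, fun v hv v' hv' hne => absurd ?_ hP⟩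
      exact ⟨(v, v'), by rw [hPdef, Finset.mem_filter, Finset.mem_product]; exact ⟨⟨hv, hv'⟩, hne⟩⟩
  obtain ⟨θ, hθ0, hθθ₀⟩ := exists_rat_btwn hθ₀pos
  have hθpos : 0 < θ := by exact_mod_cast hθ0
  -- rational centers and values
  have hctr : ∀ v ∈ s, ∃ cv : ℚ, |(cv : ℝ) - ξ v| < (θ : ℝ) / 4 := by
    intro v hv
    obtain ⟨cv, h1, h2⟩ := exists_rat_btwn
      (show ξ v - (θ : ℝ) / 4 < ξ v by
        have h0 : (0:ℝ) < (θ:ℝ) := by exact_mod_cast hθpos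
        linarith)
    refine ⟨cv, ?_⟩
    rw [abs_sub_lt_iff]
    constructor <;> linarith
  choose! ctr hctr using hctr
  have hval : ∀ v ∈ s, ∃ qv : ℚ, |(qv : ℝ) - c v| ≤ δ / 4 := by
    intro v hv
    obtain ⟨qv, h1, h2⟩ := exists_rat_btwn (show c v - δ / 4 < c v by linarith)
    refine ⟨qv, ?_⟩
    rw [abs_sub_le_iff]
    constructor <;> [linarith; linarith]
  choose! vl hvl using hval
  set J : Finset (ℚ × ℚ × ℚ) := s.image (fun v => (ctr v, θ / 2, vl v)) with hJdef
  -- tail bounds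
  have hyt := tendsto_of_mem_span_c0 hy
  obtain ⟨N₁, hN₁⟩ : ∃ N, ∀ k, N ≤ k → |y k| ≤ δ / 4 := by
    obtain ⟨N, hN⟩ := Metric.tendsto_atTop.mp hyt (δ / 4) (by positivity)
    exact ⟨N, fun k hk => le_of_lt (by simpa [Real.dist_eq] using hN k hk)⟩
  -- pairwise intersections
  have hpairs : (⋃ p ∈ ((s ×ˢ s).filter fun p => p.1 ≠ p.2),
      (Afam (ξ p.1) ∩ Afam (ξ p.2))).Finite := by
    refine Set.Finite.biUnion (Finset.finite_toSet _) fun p hp => ?_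
    have hmem := Finset.mem_filter.mp hp
    have h12 := Finset.mem_product.mp hmem.1
    exact Afam_ad (hξinj _ h12.1 _ h12.2 hmem.2)
  obtain ⟨b₂, hb₂⟩ := hpairs.bddAbove
  set N₂ := b₂ + 1 with hN₂def
  -- exceptional sets
  have hexc : (⋃ v ∈ s, {k | k ∈ Afam (ξ v) ∧ (θ : ℝ) / 4 ≤ |(qe k : ℝ) - ξ v|}).Finite := by
    refine Set.Finite.biUnion (Finset.finite_toSet _) fun v hv => ?_
    refine Afam_finite_far (ξ v) ?_
    have h0 : (0:ℝ) < (θ:ℝ) := by exact_mod_cast hθpos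
    linarith
  obtain ⟨b₃, hb₃⟩ := hexc.bddAbove
  set N₃ := b₃ + 1 with hN₃def
  obtain ⟨N₄, hN₄⟩ := exists_pow_lt_of_lt_one (show (0:ℝ) < δ ^ 2 by positivity)
    (by norm_num : (1:ℝ) / 2 < 1)
  set n := max (max N₁ N₂) (max N₃ N₄) with hndef
  -- head approximations
  have hτ : ∀ i : Fin n, ∃ p : ℚ, |x i - (p : ℝ)| ≤ δ := by
    intro i
    obtain ⟨p, h1, h2⟩ := exists_rat_btwn (show x i - δ < x i by linarith)
    refine ⟨p, ?_⟩
    rw [abs_sub_le_iff]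
    constructor <;> linarith
  choose τ hτ' using hτ
  refine ⟨(ρ, List.ofFn τ, J), hρpos, hx, le_of_lt hρnu, by linarith, ?_, ?_, ?_, ?_⟩
  · -- (1/2) ^ length ≤ (ρ/8)^2
    have hlen : (List.ofFn τ).length = n := List.length_ofFn (f := τ)
    rw [hlen]
    have h1 : ((1:ℝ)/2) ^ n ≤ ((1:ℝ)/2) ^ N₄ :=
      pow_le_pow_of_le_one (by norm_num) (by norm_num) (le_max_of_le_right (le_max_right _ _))
    have : ((ρ:ℝ)/8) ^ 2 = δ ^ 2 := by rw [hδdef]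
    rw [this]
    linarith
  · -- head condition
    intro k hk
    have hk' : k < n := by simpa [List.length_ofFn] using hk
    have := hτ' ⟨k, hk'⟩
    simpa [List.get_ofFn] using this
  · -- disjointness of intervals
    intro u hu u' hu' hne p hp
    rw [hJdef, Finset.mem_image] at hu hu'
    obtain ⟨v, hv, rfl⟩ := hu
    obtain ⟨v', hv', rfl⟩ := hu'
    have hvv : v ≠ v' := fun h => hne (by rw [h])
    obtain ⟨h1, h2⟩ := hp
    simp only at h1 h2
    have h1' : |(p:ℝ) - (ctr v : ℝ)| < (θ:ℝ)/2 := by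
      have : ((|p - ctr v| : ℚ) : ℝ) < ((θ/2 : ℚ) : ℝ) := by exact_mod_cast h1
      push_cast at this
      convert this using 2 <;> push_cast <;> ring
    have h2' : |(p:ℝ) - (ctr v' : ℝ)| < (θ:ℝ)/2 := by
      have : ((|p - ctr v'| : ℚ) : ℝ) < ((θ/2 : ℚ) : ℝ) := by exact_mod_cast h2
      push_cast at this
      convert this using 2 <;> push_cast <;> ring
    have hc1 := hctr v hv
    have hc2 := hctr v' hv'
    have hsepvv := hsep v hv v' hv' hvv
    have habs : |ξ v - ξ v'| ≤ |(ctr v : ℝ) - ξ v| + |(p:ℝ) - (ctr v : ℝ)| +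
        |(p:ℝ) - (ctr v' : ℝ)| + |(ctr v' : ℝ) - ξ v'| := by
      have e1 : ξ v - ξ v' = -((ctr v : ℝ) - ξ v) + (-((p:ℝ) - (ctr v : ℝ))) +
          ((p:ℝ) - (ctr v' : ℝ)) + ((ctr v' : ℝ) - ξ v') := by ring
      calc |ξ v - ξ v'| = |(-((ctr v : ℝ) - ξ v)) + (-((p:ℝ) - (ctr v : ℝ))) +
          ((p:ℝ) - (ctr v' : ℝ)) + ((ctr v' : ℝ) - ξ v')| := by rw [← e1]
        _ ≤ _ := by
          have t1 := abs_add_le (-((ctr v : ℝ) - ξ v) + -((p:ℝ) - (ctr v : ℝ)) +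
            ((p:ℝ) - (ctr v' : ℝ))) ((ctr v' : ℝ) - ξ v')
          have t2 := abs_add_le (-((ctr v : ℝ) - ξ v) + -((p:ℝ) - (ctr v : ℝ)))
            ((p:ℝ) - (ctr v' : ℝ))
          have t3 := abs_add_le (-((ctr v : ℝ) - ξ v)) (-((p:ℝ) - (ctr v : ℝ)))
          rw [abs_neg] at t3
          rw [abs_neg] at t3
          linarith
    linarith
  · -- tail condition
    intro k hk hδk
    have hkn : n ≤ k := by simpa [List.length_ofFn] using hk
    have hk1 : N₁ ≤ k := le_trans (le_max_of_le_left (le_max_left _ _)) hkn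
    have hk2 : N₂ ≤ k := le_trans (le_max_of_le_left (le_max_right _ _)) hkn
    have hk3 : N₃ ≤ k := le_trans (le_max_of_le_right (le_max_left _ _)) hkn
    have hzk : |x k - z k| ≤ δ / 4 := by
      have h1 := abs_apply_le (x - z) k
      have h2 : ((x - z : Linfty)) k = x k - z k := by rw [lp.coeFn_sub]; rfl
      rw [h2] at h1
      linarith
    have hzco : z k = y k + w k := by
      rw [← hyw, lp.coeFn_add]; rfl
    have hwsum : w = ∑ v ∈ s, c v • v := by
      rw [← hcw]; rfl
    have hwk : (w : ℕ → ℝ) k = ∑ v ∈ s, c v * (v : ℕ → ℝ) k := by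
      rw [hwsum, coe_sum_apply]
      refine Finset.sum_congr rfl fun v hv => ?_
      rw [lp.coeFn_smul]; rfl
    by_cases hEx : ∃ v₀ ∈ s, k ∈ Afam (ξ v₀)
    · obtain ⟨v₀, hv₀, hkv₀⟩ := hEx
      have huniq : ∀ v ∈ s, v ≠ v₀ → k ∉ Afam (ξ v) := by
        intro v hv hne hkv
        have hmem : k ∈ ⋃ p ∈ ((s ×ˢ s).filter fun p => p.1 ≠ p.2),
            (Afam (ξ p.1) ∩ Afam (ξ p.2)) := by
          refine Set.mem_biUnion (x := ((v, v₀) : Linfty × Linfty)) ?_ ⟨hkv, hkv₀⟩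
          exact Finset.mem_filter.mpr ⟨Finset.mem_product.mpr ⟨hv, hv₀⟩, hne⟩
        have := hb₂ hmem
        omega
      have hwkeq : (w : ℕ → ℝ) k = c v₀ := by
        rw [hwk]
        rw [Finset.sum_eq_single_of_mem v₀ hv₀]
        · rw [← hξ v₀ hv₀, indicator_apply, if_pos hkv₀, mul_one]
        · intro v hv hne
          rw [← hξ v hv, indicator_apply, if_neg (huniq v hv hne), mul_zero]
      have hxkval : |x k - (vl v₀ : ℝ)| ≤ (ρ:ℝ) / 8 := by
        have h1 := hN₁ k hk1
        have h2 := hvl v₀ hv₀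
        have h3 : x k - (vl v₀ : ℝ) = (x k - z k) + y k + ((c v₀ - (vl v₀ : ℝ))) := by
          rw [hzco, hwkeq]; ring
        rw [abs_sub_comm] at h2
        have h4 : |x k - (vl v₀ : ℝ)| ≤ |x k - z k| + |y k| + |c v₀ - (vl v₀ : ℝ)| := by
          rw [h3]
          have t1 := abs_add_le ((x k - z k) + y k) ((c v₀ - (vl v₀ : ℝ)))
          have t2 := abs_add_le (x k - z k) (y k)
          linarith
        rw [hδdef] at hzk h1
        linarith
      have hqek : |qe k - ctr v₀| < θ / 2 := by
        have hnotexc : ¬((θ : ℝ) / 4 ≤ |(qe k : ℝ) - ξ v₀|) := by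
          intro hcon
          have hmem : k ∈ ⋃ v ∈ s, {k | k ∈ Afam (ξ v) ∧ (θ : ℝ) / 4 ≤ |(qe k : ℝ) - ξ v|} :=
            Set.mem_biUnion hv₀ ⟨hkv₀, hcon⟩
          have := hb₃ hmem
          omega
        push_neg at hnotexc
        have hc := hctr v₀ hv₀
        have : |(qe k : ℝ) - (ctr v₀ : ℝ)| < (θ:ℝ) / 2 := by
          have e1 : (qe k : ℝ) - (ctr v₀ : ℝ) = ((qe k : ℝ) - ξ v₀) - ((ctr v₀ : ℝ) - ξ v₀) := by
            ring
          rw [e1]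
          have := abs_sub (((qe k : ℝ) - ξ v₀)) (((ctr v₀ : ℝ) - ξ v₀))
          linarith
        exact_mod_cast this
      exact ⟨(ctr v₀, θ / 2, vl v₀), Finset.mem_image_of_mem _ hv₀, hqek, hxkval⟩
    · push_neg at hEx
      exfalso
      have hwk0 : (w : ℕ → ℝ) k = 0 := by
        rw [hwk]
        refine Finset.sum_eq_zero fun v hv => ?_
        rw [← hξ v hv, indicator_apply, if_neg (hEx v hv), mul_zero]
      have h1 := hN₁ k hk1
      have : |x k| ≤ δ / 4 + δ / 4 := by
        have h3 : x k = (x k - z k) + y k := by rw [hzco, hwk0]; ring_nf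
        rw [h3]
        have := abs_add_le (x k - z k) (y k)
        linarith
      rw [hδdef] at this
      linarith

end S0Aux
end
noncomputable section
namespace S0Aux

lemma Bfam_mk : Cardinal.mk Bfam = Cardinal.continuum := by
  rw [Bfam, Cardinal.mk_range_eq Afam Afam_injective, Cardinal.mk_real]

lemma Bfam_AD : ADFamily Bfam := by
  refine ⟨?_, ?_, ?_⟩
  · intro h
    have h2 : Cardinal.mk Bfam ≤ Cardinal.aleph0 := by
      have := h.to_subtype
      exact Cardinal.mk_le_aleph0
    rw [Bfam_mk] at h2
    exact absurd h2 (not_le.mpr Cardinal.aleph0_lt_continuum)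
  · rintro A ⟨r, rfl⟩
    exact Afam_infinite r
  · rintro A ⟨r, rfl⟩ B ⟨r', rfl⟩ hne
    exact Afam_ad fun h => hne (by rw [h])

lemma indicator_mem_XA (r : ℝ) : indicatorLinfty (Afam r) ∈ XA Bfam :=
  Submodule.le_topologicalClosure _
    (Submodule.subset_span (Or.inr ⟨Afam r, ⟨r, rfl⟩, rfl⟩))

lemma indicator_far {r r' : ℝ} (h : r ≠ r') :
    1 ≤ ‖indicatorLinfty (Afam r) - indicatorLinfty (Afam r')‖ := by
  have hinf : (Afam r \ Afam r').Infinite := by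
    have := (Afam_infinite r).diff (Afam_ad h)
    rwa [Set.diff_self_inter] at this
  obtain ⟨k, hk⟩ := hinf.nonempty
  have hval : ((indicatorLinfty (Afam r) - indicatorLinfty (Afam r') : Linfty)) k = 1 := by
    rw [lp.coeFn_sub]
    show (indicatorLinfty (Afam r)) k - (indicatorLinfty (Afam r')) k = 1
    rw [indicator_apply, indicator_apply, if_pos hk.1, if_neg hk.2]
    ring
  have := abs_apply_le (indicatorLinfty (Afam r) - indicatorLinfty (Afam r')) k
  rw [hval, abs_one] at this
  exact this

lemma norm_le_norm12 (f : Linfty) : ‖f‖ ≤ norm12 f := by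
  have : norm12 f = ‖f‖ + nu f := rfl
  have h2 := nu_nonneg f
  linarith

lemma nonsep :
    ¬∃ D : Set Linfty, D.Countable ∧ D ⊆ (XA Bfam : Set Linfty) ∧
      ∀ f ∈ XA Bfam, ∀ ε : ℝ, 0 < ε → ∃ g ∈ D, norm12 (f - g) < ε := by
  rintro ⟨D, hDc, -, hDapp⟩
  have hch : ∀ r : ℝ, ∃ g, g ∈ D ∧ norm12 (indicatorLinfty (Afam r) - g) < 1 / 2 := by
    intro r
    obtain ⟨g, hg1, hg2⟩ := hDapp _ (indicator_mem_XA r) (1 / 2) (by norm_num)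
    exact ⟨g, hg1, hg2⟩
  choose g hgD hgnear using hch
  have hginj : Function.Injective fun r : ℝ => (⟨g r, hgD r⟩ : ↥D) := by
    intro r r' heq
    by_contra hne
    have heq' : g r = g r' := congrArg Subtype.val heq
    have h1 : ‖indicatorLinfty (Afam r) - g r‖ < 1 / 2 :=
      lt_of_le_of_lt (norm_le_norm12 _) (hgnear r)
    have h2 : ‖indicatorLinfty (Afam r') - g r‖ < 1 / 2 := by
      rw [heq']
      exact lt_of_le_of_lt (norm_le_norm12 _) (hgnear r')
    have h3 : ‖indicatorLinfty (Afam r) - indicatorLinfty (Afam r')‖ ≤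
        ‖indicatorLinfty (Afam r) - g r‖ + ‖indicatorLinfty (Afam r') - g r‖ := by
      have h := norm_sub_le (indicatorLinfty (Afam r) - g r)
        (indicatorLinfty (Afam r') - g r)
      rwa [sub_sub_sub_cancel_right] at h
    have h4 := indicator_far hne
    linarith
  have : Countable ℝ := by
    have := hDc.to_subtype
    exact hginj.countable
  have h5 : Cardinal.mk ℝ ≤ Cardinal.aleph0 := Cardinal.mk_le_aleph0
  rw [Cardinal.mk_real] at h5
  exact absurd h5 (not_le.mpr Cardinal.aleph0_lt_continuum)

lemma covering :
    ∃ S : ℕ → Set Linfty, sphere12 Bfam = ⋃ n, S n ∧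
      ∀ n, ∃ d : ℝ, d < 1 ∧ ∀ x ∈ S n, ∀ y ∈ S n, norm12 (x - y) ≤ d := by
  classical
  have hne : Nonempty {t : PIdx // 0 < t.1} := ⟨⟨(1, [], ∅), by norm_num⟩⟩
  have hcnt : Countable {t : PIdx // 0 < t.1} := Subtype.countable
  obtain ⟨e, he⟩ := exists_surjective_nat {t : PIdx // 0 < t.1}
  refine ⟨fun n => piece Bfam (e n).1, ?_, ?_⟩
  · apply Set.eq_of_subset_of_subset
    · intro x hx
      obtain ⟨t, ht, hmem⟩ := coverage hx
      obtain ⟨n, hn⟩ := he ⟨t, ht⟩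
      refine Set.mem_iUnion.mpr ⟨n, ?_⟩
      rw [hn]
      exact hmem
    · intro x hx
      obtain ⟨n, hn⟩ := Set.mem_iUnion.mp hx
      exact hn.1
  · intro n
    refine ⟨1 - ((e n).1.1 : ℝ) / 2, ?_, ?_⟩
    · have : (0:ℝ) < ((e n).1.1 : ℝ) := by exact_mod_cast (e n).2
      linarith
    · exact piece_diam Bfam (e n).1 (e n).2

end S0Aux
end
/-- There exists an a.d.-family `𝒜` of subsets of `ℕ` of cardinality continuum
such that the Banach space `(X_𝒜, ‖·‖_{∞,2})` is nonseparable and its unit sphere is the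
union of countably many sets, each of diameter strictly less than `1`. -/
theorem statement0 :
    ∃ 𝒜 : Set (Set ℕ), ADFamily 𝒜 ∧ Cardinal.mk 𝒜 = Cardinal.continuum ∧
      (¬∃ D : Set Linfty, D.Countable ∧ D ⊆ (XA 𝒜 : Set Linfty) ∧
        ∀ f ∈ XA 𝒜, ∀ ε : ℝ, 0 < ε → ∃ g ∈ D, norm12 (f - g) < ε) ∧
      ∃ S : ℕ → Set Linfty, sphere12 𝒜 = ⋃ n, S n ∧
        ∀ n, ∃ d : ℝ, d < 1 ∧ ∀ x ∈ S n, ∀ y ∈ S n, norm12 (x - y) ≤ d := by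
  exact ⟨S0Aux.Bfam, S0Aux.Bfam_AD, S0Aux.Bfam_mk, S0Aux.nonsep, S0Aux.covering⟩
end
end

section
/- Let 𝒜 be a Luzin family, let n ∈ ℕ with n ≥ 2, and let 𝒞_0, …, 𝒞_{n−1} ⊆ 𝒜 be uncountable subfamilies. Then for each i < n there is an uncountable ℬ_i ⊆ 𝒞_i such that (ℬ_i : i < n) is an n-Luzin gap. -/
open Set Filter Cardinal

section Aux

private lemma countable_Iio_of_lt {γ : Ordinal.{0}} (h : γ < omega1) :
    {ξ : Ordinal.{0} | ξ < γ}.Countable := by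
  rw [Cardinal.countable_iff_lt_aleph_one _, show #{ξ : Ordinal.{0} | ξ < γ} = Cardinal.lift.{1} γ.card
    from Ordinal.mk_Iio_ordinal γ]
  have h1 : γ.card < aleph 1 := by rwa [← Cardinal.lt_ord]
  have := Cardinal.lift_lt.{0,1}.2 h1
  rwa [Cardinal.lift_aleph, Ordinal.lift_one] at this

lemma not_countable_Iio_omega1 : ¬ {ξ : Ordinal.{0} | ξ < omega1}.Countable := by
  rw [Cardinal.countable_iff_lt_aleph_one _, show #{ξ : Ordinal.{0} | ξ < omega1}
    = Cardinal.lift.{1} omega1.card from Ordinal.mk_Iio_ordinal _]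
  rw [show omega1.card = aleph 1 from Cardinal.card_ord _]
  rw [Cardinal.lift_aleph, Ordinal.lift_one]
  exact lt_irrefl _

/-- pigeonhole -/
lemma pigeon {U : Set Ordinal.{0}} (hU : ¬ U.Countable) (f : Ordinal.{0} → ℕ) :
    ∃ k, ¬ {α ∈ U | f α = k}.Countable := by
  by_contra hc
  push_neg at hc
  apply hU
  have : U = ⋃ k : ℕ, {α ∈ U | f α = k} := by
    ext x; simp (config := {contextual := true}) [Set.mem_iUnion]
  rw [this]
  exact Set.countable_iUnion fun k => hc k

/-- unboundedness of uncountable subsets of ω₁ -/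
lemma unbounded_of_uncountable {S : Set Ordinal.{0}} (hS : ¬ S.Countable)
    (hS1 : S ⊆ {ξ | ξ < omega1}) {γ : Ordinal.{0}} (hγ : γ < omega1) :
    ∃ ξ ∈ S, γ < ξ ∧ ξ < omega1 := by
  by_contra hc
  push_neg at hc
  apply hS
  have : S ⊆ {ξ : Ordinal.{0} | ξ < γ + 1} := by
    intro x hx
    have h1 := hS1 hx
    have h2 : x ≤ γ := by
      by_contra hgt
      push_neg at hgt
      exact absurd h1 (not_lt.2 (hc x hx hgt))
    exact lt_of_le_of_lt h2 (lt_add_one γ)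
  apply Set.Countable.mono this
  apply countable_Iio_of_lt
  have hl : Order.IsSuccLimit (omega1 : Ordinal) := Cardinal.isSuccLimit_ord (Cardinal.aleph0_le_aleph 1)
  have := (Order.IsSuccLimit.succ_lt_iff hl).2 hγ
  simpa [Order.succ] using this

/-- greedy coloring: free-set lemma via countable chromatic number -/
lemma coloring (F : Ordinal.{0} → Set Ordinal.{0}) (hsub : ∀ β, F β ⊆ Set.Iio β)
    (hfin : ∀ β, (F β).Finite) :
    ∃ c : Ordinal.{0} → ℕ, ∀ β, ∀ α ∈ F β, c α ≠ c β := by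
  set body : ∀ β : Ordinal.{0}, (∀ γ, γ < β → ℕ) → ℕ :=
    fun β IH => sInf {k : ℕ | ∀ α, ∀ h : α ∈ F β, IH α (hsub β h) ≠ k} with hbody
  set c : Ordinal.{0} → ℕ := Ordinal.lt_wf.fix body with hc
  have hceq : ∀ β, c β = sInf {k : ℕ | ∀ α, ∀ h : α ∈ F β, c α ≠ k} := by
    intro β
    rw [hc, WellFounded.fix_eq]
  refine ⟨c, fun β α hα => ?_⟩
  have hne : {k : ℕ | ∀ α, ∀ h : α ∈ F β, c α ≠ k}.Nonempty := by
    have himg : ((fun α => c α) '' F β).Finite := Set.Finite.image _ (hfin β)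
    obtain ⟨k, hk⟩ := Set.Infinite.nonempty (Set.Finite.infinite_compl himg)
    exact ⟨k, fun a ha hak => hk ⟨a, ha, hak⟩⟩
  have := Nat.sInf_mem hne
  rw [← hceq β] at this
  exact this α hα

/-- recursive choice of increasing tuples -/
lemma tuples (n : ℕ) (S : ℕ → Set Ordinal.{0})
    (hub : ∀ i γ, γ < omega1 → ∃ ξ ∈ S i, γ < ξ ∧ ξ < omega1) :
    ∃ t : Ordinal.{0} → ℕ → Ordinal.{0},
      (∀ α, α < omega1 → ∀ i, t α i ∈ S i ∧ t α i < omega1) ∧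
      (∀ α, α < omega1 → ∀ i j : ℕ, i < j → t α i < t α j) ∧
      (∀ α β, α < β → β < omega1 → ∀ i j : ℕ, i ≤ n - 1 → t α i < t β j) := by
  classical
  set pick : ℕ → Ordinal.{0} → Ordinal.{0} := fun i γ =>
    if h : ∃ ξ ∈ S i, γ < ξ ∧ ξ < omega1 then h.choose else 0 with hpick
  have pickspec : ∀ i γ, γ < omega1 →
      pick i γ ∈ S i ∧ γ < pick i γ ∧ pick i γ < omega1 := by
    intro i γ hγ
    have h := hub i γ hγ
    rw [hpick]
    simp only [dif_pos h]
    exact h.choose_spec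
  set step : ∀ α : Ordinal.{0}, (∀ β, β < α → ℕ → Ordinal.{0}) → ℕ → Ordinal.{0} :=
    fun α IH i => Nat.rec (pick 0 (Ordinal.bsup α (fun β h => IH β h (n - 1))))
      (fun k prev => pick (k + 1) prev) i with hstep
  set t : Ordinal.{0} → ℕ → Ordinal.{0} := Ordinal.lt_wf.fix step with ht
  have hteq : ∀ α, t α = step α (fun β _ => t β) := by
    intro α; rw [ht]; exact WellFounded.fix_eq _ _ _
  have ht0 : ∀ α, t α 0 = pick 0 (Ordinal.bsup α (fun β _ => t β (n - 1))) := by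
    intro α; rw [hteq α]; rfl
  have hts : ∀ α i, t α (i + 1) = pick (i + 1) (t α i) := by
    intro α i
    conv_lhs => rw [hteq α]
    rw [hstep]
    simp only []
    congr 1
    rw [hteq α]
  have main : ∀ α, α < omega1 →
      ((∀ i, t α i ∈ S i ∧ t α i < omega1) ∧
       (∀ i, t α i < t α (i + 1)) ∧
       (∀ β, β < α → t β (n - 1) < t α 0)) := by
    intro α
    induction α using WellFounded.induction Ordinal.lt_wf with
    | _ α IH =>
      intro hα
      have hb : Ordinal.bsup α (fun β _ => t β (n - 1)) < omega1 := by
        apply Cardinal.bsup_lt_ord_of_isRegular Cardinal.isRegular_aleph_one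
        · exact Cardinal.lt_ord.1 hα
        · intro β hβ
          exact ((IH β hβ (hβ.trans hα)).1 (n - 1)).2
      have h0 := pickspec 0 _ hb
      rw [← ht0 α] at h0
      have hchain : ∀ i, (t α i ∈ S i ∧ t α i < omega1) ∧ t α i < t α (i + 1) := by
        intro i
        induction i with
        | zero =>
          refine ⟨⟨h0.1, h0.2.2⟩, ?_⟩
          rw [hts α 0]
          exact (pickspec 1 _ h0.2.2).2.1
        | succ k ihk =>
          have hk1 : t α (k + 1) < omega1 := by
            rw [hts α k]
            exact (pickspec (k + 1) _ ihk.1.2).2.2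
          have hmem : t α (k + 1) ∈ S (k + 1) := by
            rw [hts α k]
            exact (pickspec (k + 1) _ ihk.1.2).1
          refine ⟨⟨hmem, hk1⟩, ?_⟩
          rw [hts α (k + 1)]
          exact (pickspec (k + 2) _ hk1).2.1
      refine ⟨fun i => (hchain i).1, fun i => (hchain i).2, fun β hβ => ?_⟩
      calc t β (n - 1) ≤ Ordinal.bsup α (fun β _ => t β (n - 1)) := Ordinal.le_bsup _ β hβ
        _ < t α 0 := by rw [ht0 α]; exact (pickspec 0 _ hb).2.1
  refine ⟨t, fun α hα => (main α hα).1, fun α hα i j hij => ?_, fun α β hαβ hβ i j hi => ?_⟩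
  · exact strictMono_nat_of_lt_succ (main α hα).2.1 hij
  · have hα : α < omega1 := hαβ.trans hβ
    have h1 : t α i ≤ t α (n - 1) :=
      (strictMono_nat_of_lt_succ (main α hα).2.1).monotone hi
    have h2 : t β 0 ≤ t β j :=
      (strictMono_nat_of_lt_succ (main β hβ).2.1).monotone (Nat.zero_le j)
    exact lt_of_le_of_lt h1 (lt_of_lt_of_le ((main β hβ).2.2 α hαβ) h2)

end Aux

/-- a Luzin family contains an `n`-Luzin gap inside any `n` uncountable
subfamilies. -/
theorem statement2 (𝒜 : Set (Set ℕ)) (h𝒜 : IsLuzinFamily 𝒜) (n : ℕ) (hn : 2 ≤ n)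
    (𝒞 : Fin n → Set (Set ℕ)) (h𝒞 : ∀ i, 𝒞 i ⊆ 𝒜) (h𝒞un : ∀ i, ¬(𝒞 i).Countable) :
    ∃ B : Fin n → Ordinal.{0} → Set ℕ,
      (∀ i : Fin n, ∀ α < omega1, B i α ∈ 𝒞 i) ∧ IsNLuzinGap n B := by
  classical
  obtain ⟨⟨hA_unc, hA_inf, hA_ad⟩, A, hA1, hA2, hA3, hA4⟩ := h𝒜
  have hnpos : 0 < n := lt_of_lt_of_le two_pos hn
  -- finiteness of "bad" sets from the Luzin property
  have badfin : ∀ η < omega1, ∀ m : ℕ, 1 ≤ m →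
      {ξ : Ordinal.{0} | ξ < η ∧ A ξ ∩ A η ⊆ Set.Iio m}.Finite := by
    intro η hη m hm
    have hU : (⋃ k ∈ Finset.range m,
        {ξ : Ordinal.{0} | ξ < η ∧ sSup (A ξ ∩ A η) = k}).Finite :=
      Set.Finite.biUnion (Finset.range m).finite_toSet (fun k _ => hA4 η hη k)
    apply hU.subset
    rintro ξ ⟨hξη, hsub⟩
    have hfin : (A ξ ∩ A η).Finite := (Set.finite_Iio m).subset hsub
    have hlt : sSup (A ξ ∩ A η) < m := by
      rcases (A ξ ∩ A η).eq_empty_or_nonempty with he | hne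
      · rw [he, csSup_empty]; exact hm
      · exact hsub (hne.csSup_mem hfin)
    simp only [Set.mem_iUnion, Finset.mem_range]
    exact ⟨sSup (A ξ ∩ A η), hlt, hξη, rfl⟩
  -- the index sets of the subfamilies
  set S : ℕ → Set Ordinal.{0} :=
    fun i => {ξ | ξ < omega1 ∧ A ξ ∈ 𝒞 ⟨i % n, Nat.mod_lt i hnpos⟩} with hS
  have hSunc : ∀ i : ℕ, ¬ (S i).Countable := by
    intro i hcnt
    apply h𝒞un ⟨i % n, Nat.mod_lt i hnpos⟩
    have : 𝒞 ⟨i % n, Nat.mod_lt i hnpos⟩ ⊆ A '' S i := by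
      intro X hX
      obtain ⟨ξ, hξ, hξX⟩ := hA2 X (h𝒞 _ hX)
      exact ⟨ξ, ⟨hξ, hξX ▸ hX⟩, hξX⟩
    exact (hcnt.image A).mono this
  have hub : ∀ i γ, γ < omega1 → ∃ ξ ∈ S i, γ < ξ ∧ ξ < omega1 :=
    fun i γ hγ => unbounded_of_uncountable (hSunc i) (fun ξ hξ => hξ.1) hγ
  obtain ⟨t, htmem, htmono, htcross⟩ := tuples n S hub
  have htlt : ∀ α, α < omega1 → ∀ i : ℕ, t α i < omega1 :=
    fun α hα i => (htmem α hα i).2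
  have htC : ∀ α, α < omega1 → ∀ i : Fin n, A (t α (i : ℕ)) ∈ 𝒞 i := by
    intro α hα i
    have := (htmem α hα (i : ℕ)).1
    rw [hS] at this
    have h2 := this.2
    have : (⟨(i : ℕ) % n, Nat.mod_lt _ hnpos⟩ : Fin n) = i := by
      apply Fin.ext; simp [Nat.mod_eq_of_lt i.isLt]
    rwa [this] at h2
  have htA : ∀ α, α < omega1 → ∀ i : Fin n, A (t α (i : ℕ)) ∈ 𝒜 :=
    fun α hα i => h𝒞 i (htC α hα i)
  -- distinctness of all chosen indices
  have hidx : ∀ α, α < omega1 → ∀ β, β < omega1 → ∀ i j : ℕ, i < n → j < n →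
      (α ≠ β ∨ i ≠ j) → t α i ≠ t β j := by
    intro α hα β hβ i j hi hj hor
    rcases lt_trichotomy α β with h | h | h
    · exact ne_of_lt (htcross α β h hβ i j ((by omega : i ≤ n - 1)))
    · subst h
      rcases hor with h | h
      · exact absurd rfl h
      · rcases lt_or_gt_of_ne h with h' | h'
        · exact ne_of_lt (htmono α hα i j h')
        · exact (ne_of_lt (htmono α hα j i h')).symm
    · exact (ne_of_lt (htcross β α h hα j i ((by omega : j ≤ n - 1)))).symm
  have hAdist : ∀ α, α < omega1 → ∀ β, β < omega1 → ∀ i j : Fin n,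
      (α ≠ β ∨ i ≠ j) → A (t α (i : ℕ)) ≠ A (t β (j : ℕ)) := by
    intro α hα β hβ i j hor
    apply hA3 _ (htlt α hα i) _ (htlt β hβ j)
    apply hidx α hα β hβ i j i.isLt j.isLt
    rcases hor with h | h
    · exact Or.inl h
    · exact Or.inr (fun hc => h (Fin.ext hc))
  -- choice of per-stage bounds
  have hex : ∀ α, α < omega1 → ∃ m : ℕ, 1 ≤ m ∧ ∀ i j : Fin n, i ≠ j →
      A (t α (i : ℕ)) ∩ A (t α (j : ℕ)) ⊆ Set.Iio m := by
    intro α hα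
    have hfin : (⋃ (i : Fin n) (j : Fin n) (_ : i ≠ j),
        A (t α (i : ℕ)) ∩ A (t α (j : ℕ))).Finite := by
      refine Set.finite_iUnion fun i => Set.finite_iUnion fun j => Set.finite_iUnion fun hij =>
        hA_ad _ (htA α hα i) _ (htA α hα j) (hAdist α hα α hα i j (Or.inr hij))
    obtain ⟨b, hb⟩ := hfin.bddAbove
    refine ⟨b + 1, Nat.le_add_left 1 b, fun i j hij x hx => ?_⟩
    have : x ∈ ⋃ (i : Fin n) (j : Fin n) (_ : i ≠ j),
        A (t α (i : ℕ)) ∩ A (t α (j : ℕ)) := by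
      simp only [Set.mem_iUnion]; exact ⟨i, j, hij, hx⟩
    exact lt_of_le_of_lt (hb this) (lt_add_one b)
  set M : Ordinal.{0} → ℕ := fun α => if h : α < omega1 then (hex α h).choose else 1
    with hM
  have hMspec : ∀ α, ∀ hα : α < omega1, 1 ≤ M α ∧ ∀ i j : Fin n, i ≠ j →
      A (t α (i : ℕ)) ∩ A (t α (j : ℕ)) ⊆ Set.Iio (M α) := by
    intro α hα
    rw [hM]; simp only [dif_pos hα]
    exact (hex α hα).choose_spec
  -- pigeonhole to stabilise the bound
  obtain ⟨m, hT⟩ := pigeon not_countable_Iio_omega1 M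
  set T : Set Ordinal.{0} := {α ∈ {ξ : Ordinal.{0} | ξ < omega1} | M α = m} with hTdef
  have hTsub : ∀ α ∈ T, α < omega1 ∧ M α = m := fun α hα => hα
  have hm1 : 1 ≤ m := by
    have hTne : T.Nonempty := by
      rcases T.eq_empty_or_nonempty with h | h
      · exact absurd (Set.countable_empty.mono h.le) hT
      · exact h
    obtain ⟨α, hα⟩ := hTne
    have := (hMspec α (hTsub α hα).1).1
    rwa [(hTsub α hα).2] at this
  -- the conflict relation and greedy colouring
  set F : Ordinal.{0} → Set Ordinal.{0} := fun β =>
    {α | α < β ∧ β < omega1 ∧ ∀ i j : ℕ, i < n → j < n → i ≠ j →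
      A (t α i) ∩ A (t β j) ⊆ Set.Iio m} with hF
  have hFsub : ∀ β, F β ⊆ Set.Iio β := fun β α hα => hα.1
  have hFfin : ∀ β, (F β).Finite := by
    intro β
    by_cases hβ : β < omega1
    · have h1lt : (1 : ℕ) < n := hn
      have hbad : {ξ : Ordinal.{0} | ξ < t β 1 ∧ A ξ ∩ A (t β 1) ⊆ Set.Iio m}.Finite :=
        badfin _ (htlt β hβ 1) m hm1
      apply Set.Finite.of_finite_image (f := fun α => t α 0)
      · apply hbad.subset
        rintro x ⟨α, hα, rfl⟩
        refine ⟨htcross α β hα.1 hβ 0 1 (Nat.zero_le _), ?_⟩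
        exact hα.2.2 0 1 hnpos h1lt (by omega)
      · intro α hα α' hα' hee
        by_contra hne
        rcases lt_or_gt_of_ne hne with h | h
        · exact absurd hee (ne_of_lt (htcross α α' h (hα'.1.trans hβ) 0 0 (Nat.zero_le _)))
        · exact absurd hee.symm (ne_of_lt (htcross α' α h (hα.1.trans hβ) 0 0 (Nat.zero_le _)))
    · have : F β = ∅ := by
        ext α; simp only [hF, Set.mem_setOf_eq, Set.mem_empty_iff_false, iff_false]
        rintro ⟨-, hc, -⟩; exact hβ hc
      rw [this]; exact Set.finite_empty
  obtain ⟨c, hcol⟩ := coloring F hFsub hFfin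
  obtain ⟨k, hT'⟩ := pigeon hT c
  set T' : Set Ordinal.{0} := {α ∈ T | c α = k} with hT'def
  have hT'sub : ∀ α ∈ T', α < omega1 ∧ M α = m ∧ c α = k :=
    fun α hα => ⟨hα.1.1, hα.1.2, hα.2⟩
  -- crossing between any two members of T'
  have hcr : ∀ α β, α ∈ T' → β ∈ T' → α < β →
      ∃ i j : ℕ, i < n ∧ j < n ∧ i ≠ j ∧
        ¬ (A (t α i) ∩ A (t β j) ⊆ Set.Iio m) := by
    intro α β hα hβ hαβ
    have hnF : α ∉ F β := by
      intro hmem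
      exact hcol β α hmem ((hT'sub α hα).2.2.trans (hT'sub β hβ).2.2.symm)
    rw [hF] at hnF
    simp only [Set.mem_setOf_eq, not_and] at hnF
    have := hnF hαβ (hT'sub β hβ).1
    push_neg at this
    obtain ⟨i, j, hi, hj, hij, hns⟩ := this
    exact ⟨i, j, hi, hj, hij, hns⟩
  -- enumerate T' by ω₁
  have hmkIio : #({ξ : Ordinal.{0} | ξ < omega1}) = Cardinal.lift.{1} ((aleph 1) : Cardinal.{0}) := by
    rw [show #({ξ : Ordinal.{0} | ξ < omega1}) = Cardinal.lift.{1} omega1.card from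
      Ordinal.mk_Iio_ordinal _, show omega1.card = aleph 1 from Cardinal.card_ord _]
  have hmkT' : #(T' : Set Ordinal.{0}) = #({ξ : Ordinal.{0} | ξ < omega1}) := by
    apply le_antisymm
    · exact Cardinal.mk_le_mk_of_subset (fun α hα => (hT'sub α hα).1)
    · rw [hmkIio, Cardinal.lift_aleph, Ordinal.lift_one]
      by_contra hcon
      push_neg at hcon
      exact hT' ((Cardinal.countable_iff_lt_aleph_one _).2 hcon)
  obtain ⟨f⟩ := Cardinal.eq.1 hmkT'.symm
  set e : Ordinal.{0} → Ordinal.{0} :=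
    fun γ => if h : γ < omega1 then (f ⟨γ, h⟩ : Ordinal.{0}) else 0 with he
  have heT' : ∀ γ, γ < omega1 → e γ ∈ T' := by
    intro γ hγ; rw [he]; simp only [dif_pos hγ]; exact (f ⟨γ, hγ⟩).2
  have heinj : ∀ γ δ, γ < omega1 → δ < omega1 → γ ≠ δ → e γ ≠ e δ := by
    intro γ δ hγ hδ hne
    rw [he]; simp only [dif_pos hγ, dif_pos hδ]
    intro hc
    exact hne (Subtype.ext_iff.1 (f.injective (Subtype.ext hc)))
  have heω : ∀ γ, γ < omega1 → e γ < omega1 := fun γ hγ => ((heT' γ hγ).1.1 : _)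
  -- the gap
  set 𝔅 : Fin n → Ordinal.{0} → Set ℕ := fun i α => A (t (e α) (i : ℕ)) with h𝔅
  have h𝔅app : ∀ (i : Fin n) (α : Ordinal.{0}), 𝔅 i α = A (t (e α) (i : ℕ)) :=
    fun i α => rfl
  refine ⟨𝔅, fun i α hα => htC _ (heω α hα) i, ?_, ?_, m, ?_, ?_⟩
  · intro i α hα β hβ hne
    rw [h𝔅app, h𝔅app]
    exact hAdist _ (heω α hα) _ (heω β hβ) i i
      (Or.inl (heinj α β hα hβ hne))
  · intro i j hij α hα β hβ
    rw [h𝔅app, h𝔅app]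
    by_cases hee : e α = e β
    · rw [hee]
      exact hAdist _ (heω β hβ) _ (heω β hβ) i j (Or.inr hij)
    · exact hAdist _ (heω α hα) _ (heω β hβ) i j (Or.inl hee)
  · intro i j hij α hα
    rw [h𝔅app, h𝔅app]
    have h2 := (hMspec (e α) (heω α hα)).2 i j (ne_of_lt hij)
    rwa [(hT'sub _ (heT' α hα)).2.1] at h2
  · intro α hα β hβ hne hsub
    simp only [h𝔅app] at hsub
    have hee : e α ≠ e β := heinj α β hα hβ hne
    rcases lt_or_gt_of_ne hee with h | h
    · obtain ⟨i, j, hi, hj, hij, hns⟩ := hcr _ _ (heT' α hα) (heT' β hβ) h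
      apply hns
      refine subset_trans ?_ hsub
      intro x hx
      simp only [Set.mem_iUnion]
      exact ⟨⟨i, hi⟩, ⟨j, hj⟩, fun hc => hij (Fin.mk_eq_mk.1 hc), hx⟩
    · obtain ⟨i, j, hi, hj, hij, hns⟩ := hcr _ _ (heT' β hβ) (heT' α hα) h
      apply hns
      refine subset_trans ?_ hsub
      intro x hx
      simp only [Set.mem_iUnion]
      refine ⟨⟨j, hj⟩, ⟨i, hi⟩, fun hc => hij (Fin.mk_eq_mk.1 hc).symm, ?_⟩
      exact ⟨hx.2, hx.1⟩
end

section
/- There is an a.d.-family 𝒜 of subsets of ℕ of cardinality continuum which contains a 2-Luzin gap but contains no Luzin subfamily (i.e., no subfamily of 𝒜 is a Luzin family). -/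
open Set Filter Cardinal

namespace St3


/-- code of a binary string, in residue class `r` mod 3 -/
def cd (r : ℕ) (t : List Bool) : ℕ := 3 * Encodable.encode t + r

lemma cd_inj {r : ℕ} : Function.Injective (cd r) := by
  intro s t h
  exact Encodable.encode_injective (by unfold cd at h; omega)

lemma cd_ne {r s : ℕ} (hr : r < 3) (hs : s < 3) (hrs : r ≠ s) (t u : List Bool) :
    cd r t ≠ cd s u := by unfold cd; omega

/-- prefix of `x` of length `n` -/
def pre (x : ℕ → Bool) (n : ℕ) : List Bool := List.ofFn (fun i : Fin n => x i)

/-- the length-`(n+1)` string agreeing with `x` below `n` and flipped at `n` -/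
def off (x : ℕ → Bool) (n : ℕ) : List Bool := pre x n ++ [!x n]

@[simp] lemma pre_length (x : ℕ → Bool) (n : ℕ) : (pre x n).length = n := by
  simp [pre]

@[simp] lemma off_length (x : ℕ → Bool) (n : ℕ) : (off x n).length = n + 1 := by
  simp [off]

lemma pre_eq_iff {x y : ℕ → Bool} {a b : ℕ} :
    pre x a = pre y b ↔ a = b ∧ ∀ i < a, x i = y i := by
  constructor
  · intro h
    have hl : a = b := by
      have := congrArg List.length h; simpa using this
    subst hl
    refine ⟨rfl, fun i hi => ?_⟩
    have := List.ofFn_inj.mp h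
    exact congrFun this ⟨i, hi⟩
  · rintro ⟨rfl, h⟩
    unfold pre
    congr 1
    funext i
    exact h i i.2

lemma off_eq_off_iff {x y : ℕ → Bool} {a b : ℕ} :
    off x a = off y b ↔ a = b ∧ (∀ i < a, x i = y i) ∧ x a = y a := by
  constructor
  · intro h
    have hl : a = b := by
      have := congrArg List.length h; simpa using this
    subst hl
    obtain ⟨h1, h2⟩ := List.append_inj h (by simp)
    obtain ⟨-, h3⟩ := pre_eq_iff.mp h1
    refine ⟨rfl, h3, ?_⟩
    have : (!x a) = (!y a) := by simpa using h2
    simpa using this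
  · rintro ⟨rfl, h1, h2⟩
    unfold off
    rw [pre_eq_iff.mpr ⟨rfl, h1⟩, h2]

lemma off_eq_pre_iff {x y : ℕ → Bool} {a b : ℕ} :
    off x a = pre y b ↔ b = a + 1 ∧ (∀ i < a, x i = y i) ∧ x a ≠ y a := by
  have hps : pre y (a+1) = pre y a ++ [y a] := by
    unfold pre
    rw [List.ofFn_succ']
    simp [List.concat_eq_append]
  constructor
  · intro h
    have hl : b = a + 1 := by
      have := congrArg List.length h; simp at this; omega
    subst hl
    rw [hps] at h
    obtain ⟨h1, h2⟩ := List.append_inj h (by simp)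
    obtain ⟨-, h3⟩ := pre_eq_iff.mp h1
    have h4 : (!x a) = y a := by simpa using h2
    refine ⟨rfl, h3, ?_⟩
    cases hxa : x a <;> cases hya : y a <;> simp_all
  · rintro ⟨rfl, h1, h2⟩
    rw [hps]
    unfold off
    rw [pre_eq_iff.mpr ⟨rfl, h1⟩]
    congr 2
    cases hxa : x a <;> cases hya : y a <;> simp_all

/-- first difference of `x` and `y` -/
noncomputable def dd (x y : ℕ → Bool) : ℕ := sInf {n | x n ≠ y n}

lemma dd_symm (x y : ℕ → Bool) : dd x y = dd y x := by
  unfold dd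
  congr 1
  ext n
  exact ne_comm

lemma dd_spec {x y : ℕ → Bool} (h : x ≠ y) : x (dd x y) ≠ y (dd x y) := by
  have : {n | x n ≠ y n}.Nonempty := by
    by_contra hc
    rw [Set.not_nonempty_iff_eq_empty] at hc
    apply h
    funext n
    by_contra hn
    exact absurd (hc ▸ hn : n ∈ (∅ : Set ℕ)) (Set.notMem_empty n)
  exact Nat.sInf_mem this

lemma dd_agree {x y : ℕ → Bool} {i : ℕ} (h : i < dd x y) : x i = y i := by
  by_contra hc
  exact absurd (Nat.notMem_of_lt_sInf h) (by simp [hc])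

lemma dd_unique {x y : ℕ → Bool} {k : ℕ} (h1 : ∀ i < k, x i = y i) (h2 : x k ≠ y k) :
    dd x y = k := by
  apply le_antisymm
  · exact Nat.sInf_le h2
  · by_contra hc
    push_neg at hc
    exact absurd (h1 _ hc) (dd_spec (by intro he; exact h2 (congrFun he k)))

lemma le_dd_iff {x y : ℕ → Bool} (h : x ≠ y) {a : ℕ} :
    a ≤ dd x y ↔ ∀ i < a, x i = y i := by
  constructor
  · intro ha i hi
    exact dd_agree (lt_of_lt_of_le hi ha)
  · intro ha
    by_contra hc
    push_neg at hc
    exact dd_spec h (ha _ hc)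

/-- Side-0 member: prefixes of `x` on residue 0, one-off nodes on residue 2. -/
def B0 (x : ℕ → Bool) : Set ℕ := cd 0 '' Set.range (pre x) ∪ cd 2 '' Set.range (off x)

/-- Side-1 member: prefixes of `x` on residues 1 and 2. -/
def B1 (x : ℕ → Bool) : Set ℕ := cd 1 '' Set.range (pre x) ∪ cd 2 '' Set.range (pre x)

lemma mem_B0 {x : ℕ → Bool} {n : ℕ} :
    n ∈ B0 x ↔ (∃ a, cd 0 (pre x a) = n) ∨ (∃ a, cd 2 (off x a) = n) := by
  simp [B0]

lemma mem_B1 {x : ℕ → Bool} {n : ℕ} :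
    n ∈ B1 x ↔ (∃ a, cd 1 (pre x a) = n) ∨ (∃ a, cd 2 (pre x a) = n) := by
  simp [B1]

lemma B0_infinite (x : ℕ → Bool) : (B0 x).Infinite :=
  Set.infinite_of_injective_forall_mem
    (f := fun n => cd 0 (pre x n))
    (fun a b h => by simpa using (pre_eq_iff.mp (cd_inj h)).1)
    (fun n => mem_B0.mpr (Or.inl ⟨n, rfl⟩))

lemma B1_infinite (x : ℕ → Bool) : (B1 x).Infinite :=
  Set.infinite_of_injective_forall_mem
    (f := fun n => cd 1 (pre x n))
    (fun a b h => by simpa using (pre_eq_iff.mp (cd_inj h)).1)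
    (fun n => mem_B1.mpr (Or.inl ⟨n, rfl⟩))

/-- diagonal: `B0 x` and `B1 x` are disjoint -/
lemma B0_inter_B1_self (x : ℕ → Bool) : B0 x ∩ B1 x = ∅ := by
  ext n
  simp only [Set.mem_inter_iff, Set.mem_empty_iff_false, iff_false]
  rintro ⟨h0, h1⟩
  rcases mem_B0.mp h0 with ⟨a, rfl⟩ | ⟨a, rfl⟩ <;>
    rcases mem_B1.mp h1 with ⟨b, hb⟩ | ⟨b, hb⟩
  · exact cd_ne (by norm_num) (by norm_num) (by norm_num) _ _ hb.symm
  · exact cd_ne (by norm_num) (by norm_num) (by norm_num) _ _ hb.symm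
  · exact cd_ne (by norm_num) (by norm_num) (by norm_num) _ _ hb
  · have := off_eq_pre_iff.mp (cd_inj hb.symm)
    exact this.2.2 rfl

/-- the cross intersection is exactly one point -/
lemma B0_inter_B1 {x y : ℕ → Bool} (h : x ≠ y) :
    B0 x ∩ B1 y = {cd 2 (pre y (dd x y + 1))} := by
  ext n
  simp only [Set.mem_inter_iff, Set.mem_singleton_iff]
  constructor
  · rintro ⟨h0, h1⟩
    rcases mem_B0.mp h0 with ⟨a, rfl⟩ | ⟨a, rfl⟩ <;>
      rcases mem_B1.mp h1 with ⟨b, hb⟩ | ⟨b, hb⟩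
    · exact absurd hb.symm (cd_ne (by norm_num) (by norm_num) (by norm_num) _ _)
    · exact absurd hb.symm (cd_ne (by norm_num) (by norm_num) (by norm_num) _ _)
    · exact absurd hb (cd_ne (by norm_num) (by norm_num) (by norm_num) _ _)
    · obtain ⟨rfl, hagree, hne⟩ := off_eq_pre_iff.mp (cd_inj hb.symm)
      have hd : dd x y = a := dd_unique hagree hne
      rw [hd]
      exact hb.symm
  · rintro rfl
    constructor
    · apply mem_B0.mpr
      refine Or.inr ⟨dd x y, ?_⟩
      congr 1
      exact off_eq_pre_iff.mpr ⟨rfl, fun i hi => dd_agree hi, dd_spec h⟩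
    · exact mem_B1.mpr (Or.inr ⟨_, rfl⟩)

/-- same-side-0 intersections depend only on `x` and `dd x y` -/
lemma B0_inter_B0 {x y : ℕ → Bool} (h : x ≠ y) :
    B0 x ∩ B0 y =
      (fun a => cd 0 (pre x a)) '' Set.Iic (dd x y) ∪
      (fun a => cd 2 (off x a)) '' Set.Iio (dd x y) := by
  ext n
  simp only [Set.mem_inter_iff, Set.mem_union, Set.mem_image, Set.mem_Iic, Set.mem_Iio]
  constructor
  · rintro ⟨h0, h0'⟩
    rcases mem_B0.mp h0 with ⟨a, rfl⟩ | ⟨a, rfl⟩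
    · left
      rcases mem_B0.mp h0' with ⟨b, hb⟩ | ⟨b, hb⟩
      · obtain ⟨rfl, hagree⟩ := pre_eq_iff.mp (cd_inj hb.symm)
        exact ⟨a, (le_dd_iff h).mpr hagree, rfl⟩
      · exact absurd hb (cd_ne (by norm_num) (by norm_num) (by norm_num) _ _)
    · right
      rcases mem_B0.mp h0' with ⟨b, hb⟩ | ⟨b, hb⟩
      · exact absurd hb (cd_ne (by norm_num) (by norm_num) (by norm_num) _ _)
      · obtain ⟨rfl, hagree, heq⟩ := off_eq_off_iff.mp (cd_inj hb.symm)
        have hle : a + 1 ≤ dd x y := (le_dd_iff h).mpr (by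
          intro i hi
          rcases Nat.lt_succ_iff_lt_or_eq.mp hi with hi' | rfl
          · exact hagree i hi'
          · exact heq)
        exact ⟨a, by omega, rfl⟩
  · rintro (⟨a, ha, rfl⟩ | ⟨a, ha, rfl⟩)
    · have hagree : ∀ i < a, x i = y i := fun i hi => dd_agree (lt_of_lt_of_le hi ha)
      refine ⟨mem_B0.mpr (Or.inl ⟨a, rfl⟩), mem_B0.mpr (Or.inl ⟨a, ?_⟩)⟩
      rw [(pre_eq_iff.mpr ⟨rfl, fun i hi => (hagree i hi).symm⟩ : pre y a = pre x a)]
    · have hagree : ∀ i < a + 1, x i = y i := fun i hi => dd_agree (by omega)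
      refine ⟨mem_B0.mpr (Or.inr ⟨a, rfl⟩), mem_B0.mpr (Or.inr ⟨a, ?_⟩)⟩
      rw [(off_eq_off_iff.mpr ⟨rfl, fun i hi => (hagree i (by omega)).symm,
        (hagree a (by omega)).symm⟩ : off y a = off x a)]

/-- same-side-1 intersections depend only on `x` and `dd x y` -/
lemma B1_inter_B1 {x y : ℕ → Bool} (h : x ≠ y) :
    B1 x ∩ B1 y =
      (fun a => cd 1 (pre x a)) '' Set.Iic (dd x y) ∪
      (fun a => cd 2 (pre x a)) '' Set.Iic (dd x y) := by
  ext n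
  simp only [Set.mem_inter_iff, Set.mem_union, Set.mem_image, Set.mem_Iic]
  constructor
  · rintro ⟨h0, h0'⟩
    rcases mem_B1.mp h0 with ⟨a, rfl⟩ | ⟨a, rfl⟩
    · left
      rcases mem_B1.mp h0' with ⟨b, hb⟩ | ⟨b, hb⟩
      · obtain ⟨rfl, hagree⟩ := pre_eq_iff.mp (cd_inj hb.symm)
        exact ⟨a, (le_dd_iff h).mpr hagree, rfl⟩
      · exact absurd hb (cd_ne (by norm_num) (by norm_num) (by norm_num) _ _)
    · right
      rcases mem_B1.mp h0' with ⟨b, hb⟩ | ⟨b, hb⟩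
      · exact absurd hb (cd_ne (by norm_num) (by norm_num) (by norm_num) _ _)
      · obtain ⟨rfl, hagree⟩ := pre_eq_iff.mp (cd_inj hb.symm)
        exact ⟨a, (le_dd_iff h).mpr hagree, rfl⟩
  · rintro (⟨a, ha, rfl⟩ | ⟨a, ha, rfl⟩) <;>
      have hagree : pre y a = pre x a :=
        pre_eq_iff.mpr ⟨rfl, fun i hi => (dd_agree (lt_of_lt_of_le hi ha)).symm⟩
    · exact ⟨mem_B1.mpr (Or.inl ⟨a, rfl⟩), mem_B1.mpr (Or.inl ⟨a, by rw [hagree]⟩)⟩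
    · exact ⟨mem_B1.mpr (Or.inr ⟨a, rfl⟩), mem_B1.mpr (Or.inr ⟨a, by rw [hagree]⟩)⟩

lemma B0_injective : Function.Injective B0 := by
  intro x y h
  by_contra hne
  have hmem : cd 0 (pre x (dd x y + 1)) ∈ B0 y := h ▸ mem_B0.mpr (Or.inl ⟨_, rfl⟩)
  rcases mem_B0.mp hmem with ⟨b, hb⟩ | ⟨b, hb⟩
  · obtain ⟨rfl, hagree⟩ := pre_eq_iff.mp (cd_inj hb).symm
    exact dd_spec hne (hagree _ (Nat.lt_succ_self _))
  · exact cd_ne (by norm_num) (by norm_num) (by norm_num) _ _ hb.symm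

lemma B1_injective : Function.Injective B1 := by
  intro x y h
  by_contra hne
  have hmem : cd 1 (pre x (dd x y + 1)) ∈ B1 y := h ▸ mem_B1.mpr (Or.inl ⟨_, rfl⟩)
  rcases mem_B1.mp hmem with ⟨b, hb⟩ | ⟨b, hb⟩
  · obtain ⟨rfl, hagree⟩ := pre_eq_iff.mp (cd_inj hb).symm
    exact dd_spec hne (hagree _ (Nat.lt_succ_self _))
  · exact cd_ne (by norm_num) (by norm_num) (by norm_num) _ _ hb.symm

lemma B0_ne_B1 (x y : ℕ → Bool) : B0 x ≠ B1 y := by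
  intro h
  have hmem : cd 0 (pre x 0) ∈ B1 y := h ▸ mem_B0.mpr (Or.inl ⟨0, rfl⟩)
  rcases mem_B1.mp hmem with ⟨b, hb⟩ | ⟨b, hb⟩ <;>
    exact cd_ne (by norm_num) (by norm_num) (by norm_num) _ _ hb.symm


lemma EQ0 {x y y' : ℕ → Bool} (h1 : x ≠ y) (h2 : x ≠ y') (h3 : dd x y = dd x y') :
    B0 x ∩ B0 y = B0 x ∩ B0 y' := by
  rw [B0_inter_B0 h1, B0_inter_B0 h2, h3]

lemma EQ1 {x y y' : ℕ → Bool} (h1 : x ≠ y) (h2 : x ≠ y') (h3 : dd x y = dd x y') :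
    B1 x ∩ B1 y = B1 x ∩ B1 y' := by
  rw [B1_inter_B1 h1, B1_inter_B1 h2, h3]

lemma dd_trans {x z w : ℕ → Bool} (hxw : x ≠ w) (h : dd x w < dd z w) :
    x ≠ z ∧ dd x z = dd x w := by
  have hag : ∀ i < dd x w, x i = z i := fun i hi =>
    (dd_agree hi).trans (dd_agree (lt_trans hi h)).symm
  have hne : x (dd x w) ≠ z (dd x w) := by
    intro he
    exact dd_spec hxw (he.trans (dd_agree h))
  exact ⟨fun he => hne (congrFun he _), dd_unique hag hne⟩

lemma exists_condensation {X : Set (ℕ → Bool)} (hX : ¬X.Countable) :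
    ∃ z ∈ X, ∀ n : ℕ, ∃ y ∈ X, y ≠ z ∧ ∀ i < n, y i = z i := by
  by_contra hc
  push_neg at hc
  apply hX
  rw [Set.countable_iff_exists_injective]
  choose! f hf using hc
  have key : ∀ z w : ℕ → Bool, z ∈ X → w ∈ X → f z = f w →
      (∀ i < f z, z i = w i) → z = w := by
    intro z w hz hw hlen hagree
    by_contra hne
    have hwz : w ≠ z := fun he => hne he.symm
    obtain ⟨i, hi, hne'⟩ := hf z hz w hw hwz
    exact hne' (hagree i hi).symm
  refine ⟨fun z => Encodable.encode (List.ofFn fun i : Fin (f (z : ℕ → Bool)) =>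
    (z : ℕ → Bool) i), ?_⟩
  intro z w h
  have h2 := Encodable.encode_injective h
  have hlen : f (z : ℕ → Bool) = f (w : ℕ → Bool) := by
    have := congrArg List.length h2; simpa using this
  apply Subtype.ext
  apply key _ _ z.2 w.2 hlen
  intro i hi
  have h3 := List.ofFn_inj.mp (hlen ▸ h2 :
    (List.ofFn fun j : Fin (f (w : ℕ → Bool)) => (z : ℕ → Bool) j) =
      (List.ofFn fun j : Fin (f (w : ℕ → Bool)) => (w : ℕ → Bool) j))
  exact congrFun h3 ⟨i, hlen ▸ hi⟩

lemma killcore {ℬ : Set (Set ℕ)} (A : Ordinal.{0} → Set ℕ)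
    (hA2 : ∀ B ∈ ℬ, ∃ ξ < omega1, A ξ = B)
    (hA4 : ∀ η < omega1, ∀ m : ℕ, {ξ : Ordinal | ξ < η ∧ sSup (A ξ ∩ A η) = m}.Finite)
    (C : ℕ → Set ℕ) (hCinj : Function.Injective C) (hC : ∀ n, C n ∈ ℬ)
    (PP : Set (Set ℕ)) (hPPB : PP ⊆ ℬ) (hPP : ¬PP.Countable)
    (hstab : ∀ P ∈ PP, ∃ S : Set ℕ, {n | C n ∩ P = S}.Infinite) : False := by
  choose ξ hξlt hξeq using fun n => hA2 (C n) (hC n)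
  set δ := iSup ξ with hδdef
  have hδ : δ < omega1 := by
    apply Ordinal.iSup_lt_ord _ hξlt
    show #ℕ < (Cardinal.aleph 1).ord.cof
    rw [Cardinal.isRegular_aleph_one.cof_eq]
    simpa using Cardinal.aleph0_lt_aleph_one
  have hle : ∀ n, ξ n ≤ δ := fun n => Ordinal.le_iSup ξ n
  have hIic : (Set.Iic δ : Set Ordinal).Countable := by
    rw [← Set.countable_coe_iff, ← Cardinal.mk_le_aleph0_iff]
    have h1 : #↑(Set.Iic δ) ≤ #↑(Set.Iio (δ + 1)) :=
      Cardinal.mk_le_mk_of_subset (fun a ha => lt_of_le_of_lt ha (lt_add_one δ))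
    refine h1.trans ?_
    rw [Ordinal.mk_Iio_ordinal]
    have hcard : (δ + 1).card ≤ Cardinal.aleph0 := by
      have hδ1 : δ + 1 < omega1 := by
        rw [Ordinal.add_one_eq_succ]
        exact (Cardinal.isSuccLimit_ord (Cardinal.aleph0_le_aleph 1)).succ_lt hδ
      have h2 := Cardinal.lt_ord.mp (show δ + 1 < (Cardinal.aleph 1).ord from hδ1)
      have h3 : Cardinal.aleph 1 = Order.succ (Cardinal.aleph 0) := by
        rw [← Cardinal.aleph_succ]; norm_num
      rw [h3, Cardinal.aleph_zero] at h2
      exact Order.lt_succ_iff.mp h2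
    calc Cardinal.lift.{1,0} (δ + 1).card ≤ Cardinal.lift.{1,0} Cardinal.aleph0 :=
          Cardinal.lift_le.mpr hcard
      _ = Cardinal.aleph0 := Cardinal.lift_aleph0
  have himg : (A '' Set.Iic δ).Countable := hIic.image A
  obtain ⟨P, hPPP, hPimg⟩ : ∃ P ∈ PP, P ∉ A '' Set.Iic δ := by
    by_contra hcon
    push_neg at hcon
    exact hPP (himg.mono hcon)
  obtain ⟨η, hηlt, hηeq⟩ := hA2 P (hPPB hPPP)
  have hδη : δ < η := by
    by_contra hcon
    push_neg at hcon
    exact hPimg ⟨η, hcon, hηeq⟩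
  obtain ⟨S, hS⟩ := hstab P hPPP
  have hsub : (ξ '' {n | C n ∩ P = S}) ⊆
      {ζ : Ordinal | ζ < η ∧ sSup (A ζ ∩ A η) = sSup S} := by
    rintro _ ⟨n, hn, rfl⟩
    exact ⟨lt_of_le_of_lt (hle n) hδη, by rw [hξeq n, hηeq, hn]⟩
  have hinf : (ξ '' {n | C n ∩ P = S}).Infinite :=
    hS.image (fun a _ b _ h => hCinj (by rw [← hξeq a, ← hξeq b, h]))
  exact (hA4 η hηlt (sSup S)).not_infinite (hinf.mono hsub)

lemma sideKill {ℬ : Set (Set ℕ)} (F : (ℕ → Bool) → Set ℕ) (hFinj : Function.Injective F)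
    (hEQ : ∀ x y y' : ℕ → Bool, x ≠ y → x ≠ y' → dd x y = dd x y' → F x ∩ F y = F x ∩ F y')
    (A : Ordinal.{0} → Set ℕ)
    (hA2 : ∀ B ∈ ℬ, ∃ ξ < omega1, A ξ = B)
    (hA4 : ∀ η < omega1, ∀ m : ℕ, {ξ : Ordinal | ξ < η ∧ sSup (A ξ ∩ A η) = m}.Finite)
    (X : Set (ℕ → Bool)) (hXunc : ¬X.Countable) (hXB : ∀ x ∈ X, F x ∈ ℬ) : False := by
  obtain ⟨z, hzX, hz⟩ := exists_condensation hXunc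
  choose y hyX hyne hyagree using hz
  set R := Set.range y with hRdef
  have hRX : R ⊆ X := by rintro _ ⟨m, rfl⟩; exact hyX m
  have hRne : ∀ v ∈ R, v ≠ z := by rintro _ ⟨m, rfl⟩; exact hyne m
  have hRle : ∀ (n : ℕ), n ≤ dd (y n) z := fun n =>
    (le_dd_iff (hyne n)).mpr (hyagree n)
  have hRinf : R.Infinite := by
    rw [← Set.infinite_coe_iff]
    by_contra hfin
    rw [not_infinite_iff_finite] at hfin
    obtain ⟨v, hv⟩ :=
      Finite.exists_infinite_fiber (fun n => (⟨y n, Set.mem_range_self n⟩ : R))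
    rw [Set.infinite_coe_iff] at hv
    have hfib : ((fun n => (⟨y n, Set.mem_range_self n⟩ : R)) ⁻¹' {v}).Finite := by
      apply (Set.finite_Iic (dd (v : ℕ → Bool) z)).subset
      intro n hn
      simp only [Set.mem_preimage, Set.mem_singleton_iff] at hn
      have : y n = (v : ℕ → Bool) := by rw [← hn]
      exact Set.mem_Iic.mpr (this ▸ hRle n)
    exact hfib.not_infinite hv
  set g := Set.Infinite.natEmbedding R hRinf with hgdef
  have hgR : ∀ n, ((g n : R) : ℕ → Bool) ∈ R := fun n => (g n).2
  have hginj : Function.Injective (fun n => ((g n : R) : ℕ → Bool)) :=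
    fun a b h => g.injective (Subtype.ext h)
  have hND : ∀ D : ℕ, {n : ℕ | D < dd ((g n : R) : ℕ → Bool) z}.Infinite := by
    intro D
    have hfin : {n : ℕ | dd ((g n : R) : ℕ → Bool) z ≤ D}.Finite := by
      have hRD : ((fun n => ((g n : R) : ℕ → Bool)) ⁻¹'
          {v | v ∈ R ∧ dd v z ≤ D}).Finite := by
        apply Set.Finite.preimage hginj.injOn
        apply Set.Finite.subset ((Set.finite_Iic D).image y)
        rintro v ⟨⟨m, rfl⟩, hvD⟩
        exact ⟨m, Set.mem_Iic.mpr ((hRle m).trans hvD), rfl⟩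
      apply hRD.subset
      intro n hn
      exact ⟨hgR n, hn⟩
    have := hfin.infinite_compl
    apply this.mono
    intro n hn
    simpa using hn
  set PP := F '' (X \ (R ∪ {z})) with hPPdef
  have hXd : ¬(X \ (R ∪ {z})).Countable := by
    intro hcnt
    apply hXunc
    have : X ⊆ (X \ (R ∪ {z})) ∪ (R ∪ {z}) := by
      intro x hx
      by_cases h : x ∈ R ∪ {z}
      · exact Or.inr h
      · exact Or.inl ⟨hx, h⟩
    exact Set.Countable.mono this
      (hcnt.union ((Set.countable_range y).union (Set.countable_singleton z)))
  have hPPunc : ¬PP.Countable := by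
    intro hcnt
    apply hXd
    exact Set.Countable.mono (Set.subset_preimage_image F _) (hcnt.preimage hFinj)
  apply killcore A hA2 hA4 (fun n => F ((g n : R) : ℕ → Bool))
    (hFinj.comp hginj) (fun n => hXB _ (hRX (hgR n))) PP
    (by rintro _ ⟨x, hx, rfl⟩; exact hXB x hx.1) hPPunc
  rintro _ ⟨x, hx, rfl⟩
  have hxz : x ≠ z := by
    intro he
    exact hx.2 (Or.inr (by rw [he]; rfl))
  set D := dd x z with hDdef
  have hNinf := hND D
  obtain ⟨n₀, hn₀⟩ := hNinf.nonempty
  refine ⟨F ((g n₀ : R) : ℕ → Bool) ∩ F x, ?_⟩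
  apply hNinf.mono
  intro n hn
  have h1 := dd_trans hxz (hn : D < dd ((g n : R) : ℕ → Bool) z)
  have h2 := dd_trans hxz (hn₀ : D < dd ((g n₀ : R) : ℕ → Bool) z)
  have := hEQ x _ _ h1.1 h2.1 (h1.2.trans h2.2.symm)
  simp only [Set.mem_setOf_eq]
  rw [Set.inter_comm, this, Set.inter_comm]

/-- The cardinality of Cantor space. -/
lemma mk_cantor : #(ℕ → Bool) = Cardinal.continuum := by
  rw [Cardinal.mk_arrow]
  simp [Cardinal.two_power_aleph0]

/-- The family. -/
def Afam : Set (Set ℕ) := Set.range B0 ∪ Set.range B1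

lemma mk_Afam : #Afam = Cardinal.continuum := by
  apply le_antisymm
  · refine le_trans (Cardinal.mk_union_le _ _) ?_
    rw [Cardinal.mk_range_eq _ B0_injective, Cardinal.mk_range_eq _ B1_injective, mk_cantor]
    exact le_of_eq (Cardinal.add_eq_self Cardinal.aleph0_le_continuum)
  · refine le_trans ?_ (Cardinal.mk_le_mk_of_subset Set.subset_union_left)
    rw [Cardinal.mk_range_eq _ B0_injective, mk_cantor]

lemma Afam_not_countable : ¬Afam.Countable := by
  intro h
  have h1 : #Afam ≤ Cardinal.aleph0 :=
    Cardinal.mk_le_aleph0_iff.mpr (Set.countable_coe_iff.mpr h)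
  rw [mk_Afam] at h1
  exact absurd (lt_of_lt_of_le Cardinal.aleph0_lt_continuum h1) (lt_irrefl _)

lemma Afam_ad : ∀ A ∈ Afam, ∀ B ∈ Afam, A ≠ B → (A ∩ B).Finite := by
  have hfin01 : ∀ x y : ℕ → Bool, (B0 x ∩ B1 y).Finite := by
    intro x y
    by_cases h : x = y
    · subst h; rw [B0_inter_B1_self]; exact Set.finite_empty
    · rw [B0_inter_B1 h]; exact Set.finite_singleton _
  rintro A (⟨x, rfl⟩ | ⟨x, rfl⟩) B (⟨y, rfl⟩ | ⟨y, rfl⟩) hne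
  · have hxy : x ≠ y := fun h => hne (by rw [h])
    rw [B0_inter_B0 hxy]
    exact ((Set.finite_Iic _).image _).union ((Set.finite_Iio _).image _)
  · exact hfin01 x y
  · rw [Set.inter_comm]; exact hfin01 y x
  · have hxy : x ≠ y := fun h => hne (by rw [h])
    rw [B1_inter_B1 hxy]
    exact ((Set.finite_Iic _).image _).union ((Set.finite_Iic _).image _)

end St3

/-- there is an a.d.-family of cardinality continuum containing a `2`-Luzin
gap but containing no Luzin subfamily. -/
theorem statement3 :
    ∃ 𝒜 : Set (Set ℕ), ADFamily 𝒜 ∧ Cardinal.mk 𝒜 = Cardinal.continuum ∧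
      ContainsNLuzinGap 𝒜 2 ∧ ∀ ℬ ⊆ 𝒜, ¬IsLuzinFamily ℬ := by
  classical
  refine ⟨St3.Afam, ⟨St3.Afam_not_countable, ?_, St3.Afam_ad⟩, St3.mk_Afam, ?_, ?_⟩
  · rintro A (⟨x, rfl⟩ | ⟨x, rfl⟩)
    · exact St3.B0_infinite x
    · exact St3.B1_infinite x
  · -- the 2-Luzin gap
    have hmk : #↥(Set.Iio omega1) = Cardinal.lift.{1,0} (Cardinal.aleph 1) := by
      rw [Ordinal.mk_Iio_ordinal, show omega1 = (Cardinal.aleph 1).ord from rfl,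
        Cardinal.card_ord]
    have hle2 : #↥(Set.Iio omega1) ≤ Cardinal.lift.{1,0} #(ℕ → Bool) := by
      rw [hmk, St3.mk_cantor]
      exact Cardinal.lift_le.mpr Cardinal.aleph_one_le_continuum
    have hemb : Nonempty (↥(Set.Iio omega1) ↪ (ℕ → Bool)) := by
      rw [← Cardinal.lift_mk_le']
      simpa using hle2
    obtain ⟨f⟩ := hemb
    set e : Ordinal.{0} → (ℕ → Bool) :=
      fun α => if h : α < omega1 then f ⟨α, h⟩ else (fun _ => false) with hedef
    have heinj : ∀ α < omega1, ∀ β < omega1, e α = e β → α = β := by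
      intro α hα β hβ h
      rw [hedef] at h
      simp only [dif_pos hα, dif_pos hβ] at h
      have := f.injective h
      exact congrArg Subtype.val this
    refine ⟨fun i α => if (i : ℕ) = 0 then St3.B0 (e α) else St3.B1 (e α), ?_, ?_, ?_, 0, ?_, ?_⟩
    · intro i α _
      dsimp only
      by_cases h : (i : ℕ) = 0
      · rw [if_pos h]; exact Or.inl ⟨e α, rfl⟩
      · rw [if_neg h]; exact Or.inr ⟨e α, rfl⟩
    · intro i α hα β hβ hab hcon
      dsimp only at hcon
      apply hab
      by_cases h : (i : ℕ) = 0
      · rw [if_pos h, if_pos h] at hcon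
        exact heinj _ hα _ hβ (St3.B0_injective hcon)
      · rw [if_neg h, if_neg h] at hcon
        exact heinj _ hα _ hβ (St3.B1_injective hcon)
    · intro i j hij α _ β _
      dsimp only
      have hvij : (i : ℕ) ≠ (j : ℕ) := fun h => hij (Fin.val_injective h)
      have hcases : (i : ℕ) = 0 ∧ (j : ℕ) = 1 ∨ (i : ℕ) = 1 ∧ (j : ℕ) = 0 := by
        have h1 := i.isLt; have h2 := j.isLt; omega
      rcases hcases with ⟨hi, hj⟩ | ⟨hi, hj⟩
      · rw [if_pos hi, if_neg (by omega : ¬(j : ℕ) = 0)]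
        exact St3.B0_ne_B1 _ _
      · rw [if_neg (by omega : ¬(i : ℕ) = 0), if_pos hj]
        exact fun h => St3.B0_ne_B1 _ _ h.symm
    · intro i j hij α _
      dsimp only
      have hvij : (i : ℕ) < (j : ℕ) := hij
      have hi : (i : ℕ) = 0 := by have := j.isLt; omega
      have hj : (j : ℕ) = 1 := by have := j.isLt; have := i.isLt; omega
      rw [if_pos hi, if_neg (by omega : ¬(j : ℕ) = 0), St3.B0_inter_B1_self]
      exact Set.empty_subset _
    · intro α hα β hβ hab hcon
      have hne : e α ≠ e β := fun h => hab (heinj α hα β hβ h)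
      have hw : St3.cd 2 (St3.pre (e β) (St3.dd (e α) (e β) + 1)) ∈
          St3.B0 (e α) ∩ St3.B1 (e β) := by
        rw [St3.B0_inter_B1 hne]
        rfl
      have hwU : St3.cd 2 (St3.pre (e β) (St3.dd (e α) (e β) + 1)) ∈
          ⋃ (i : Fin 2) (j : Fin 2) (_ : i ≠ j),
            (fun (i : Fin 2) (α : Ordinal) =>
              if (i : ℕ) = 0 then St3.B0 (e α) else St3.B1 (e α)) i α ∩
            (fun (j : Fin 2) (β : Ordinal) =>
              if (j : ℕ) = 0 then St3.B0 (e β) else St3.B1 (e β)) j β := by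
        simp only [Set.mem_iUnion]
        refine ⟨0, 1, by decide, ?_⟩
        simpa using hw
      exact Nat.not_lt_zero _ (hcon hwU)
  · -- no Luzin subfamily
    intro ℬ hsub hLuzin
    obtain ⟨⟨hunc, _, _⟩, A, hA1, hA2, hA3, hA4⟩ := hLuzin
    set X0 : Set (ℕ → Bool) := {x | St3.B0 x ∈ ℬ} with hX0def
    set X1 : Set (ℕ → Bool) := {x | St3.B1 x ∈ ℬ} with hX1def
    have hcover : ℬ ⊆ St3.B0 '' X0 ∪ St3.B1 '' X1 := by
      intro C hC
      rcases hsub hC with ⟨x, rfl⟩ | ⟨x, rfl⟩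
      · exact Or.inl ⟨x, hC, rfl⟩
      · exact Or.inr ⟨x, hC, rfl⟩
    by_cases hX0c : X0.Countable
    · by_cases hX1c : X1.Countable
      · exact hunc (Set.Countable.mono hcover ((hX0c.image _).union (hX1c.image _)))
      · exact St3.sideKill St3.B1 St3.B1_injective (fun x y y' => St3.EQ1)
          A hA2 hA4 X1 hX1c (fun x hx => hx)
    · exact St3.sideKill St3.B0 St3.B0_injective (fun x y y' => St3.EQ0)
        A hA2 hA4 X0 hX0c (fun x hx => hx)
end

section
/- Suppose 𝒜 is an a.d.-family and n, k ∈ ℕ with 2 ≤ n < k. If 𝒜 contains an n-Luzin gap, then 𝒜 contains a k-Luzin gap. -/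
open Set Filter Cardinal

/-- if `𝒜` contains an `n`-Luzin gap and `2 ≤ n < k`, then `𝒜` contains
a `k`-Luzin gap. -/
theorem statement4 (𝒜 : Set (Set ℕ)) (h𝒜 : ADFamily 𝒜) (n k : ℕ)
    (hn : 2 ≤ n) (hnk : n < k) (h : ContainsNLuzinGap 𝒜 n) :
    ContainsNLuzinGap 𝒜 k := by
  classical
  obtain ⟨B, hBmem, hBinj, hBcross, m, h1, h2⟩ := h
  obtain ⟨_hunc, _hinf, had⟩ := h𝒜
  -- the index maps ι t α = ω·α + t
  set ι : ℕ → Ordinal.{0} → Ordinal.{0} := fun t α => Ordinal.omega0 * α + t with hιdef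
  have hιmono : ∀ (s t : ℕ) {α β : Ordinal.{0}}, α < β → ι s α < ι t β := by
    intro s t α β hαβ
    calc Ordinal.omega0 * α + (s : Ordinal)
        < Ordinal.omega0 * α + Ordinal.omega0 :=
          (add_lt_add_iff_left _).2 (Ordinal.nat_lt_omega0 s)
      _ = Ordinal.omega0 * (Order.succ α) := (Ordinal.mul_succ _ _).symm
      _ ≤ Ordinal.omega0 * β := mul_le_mul_right (Order.succ_le_of_lt hαβ) _
      _ ≤ Ordinal.omega0 * β + (t : Ordinal) := le_self_add
  have hιinj : ∀ (s t : ℕ) (α β : Ordinal.{0}), ι s α = ι t β → α = β ∧ s = t := by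
    intro s t α β hEq
    rcases lt_trichotomy α β with hlt | rfl | hlt
    · exact absurd hEq (hιmono s t hlt).ne
    · refine ⟨rfl, ?_⟩
      have := add_left_cancel_iff.1 hEq
      exact_mod_cast this
    · exact absurd hEq.symm (hιmono t s hlt).ne
  have hιlt : ∀ (t : ℕ) {α : Ordinal.{0}}, α < omega1 → ι t α < omega1 := by
    intro t α hα
    rw [omega1, Cardinal.lt_ord] at hα ⊢
    rw [hιdef]
    simp only [Ordinal.card_add, Ordinal.card_mul, Ordinal.card_omega0, Ordinal.card_nat]
    exact Cardinal.add_lt_of_lt Cardinal.aleph0_lt_aleph_one.le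
      (Cardinal.mul_lt_of_lt Cardinal.aleph0_lt_aleph_one.le Cardinal.aleph0_lt_aleph_one hα)
      ((Cardinal.nat_lt_aleph0 t).trans Cardinal.aleph0_lt_aleph_one)
  have hn0 : 0 < n := by omega
  -- the k families
  set n0 : Fin n := ⟨0, hn0⟩ with hn0def
  set fI : Fin k → Fin n := fun i => if h : (i : ℕ) < n then ⟨i, h⟩ else n0 with hfI
  set tI : Fin k → ℕ := fun i => if (i : ℕ) < n then 0 else (i : ℕ) - n + 1 with htI
  set D : Fin k → Ordinal.{0} → Set ℕ := fun i α => B (fI i) (ι (tI i) α) with hD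
  have hftInj : ∀ i j : Fin k, fI i = fI j → tI i = tI j → i = j := by
    intro i j hf ht
    by_cases hi : (i : ℕ) < n <;> by_cases hj : (j : ℕ) < n
    · simp only [hfI, dif_pos hi, dif_pos hj] at hf
      exact Fin.ext (by simpa using congrArg Fin.val hf)
    · simp only [htI, if_pos hi, if_neg hj] at ht
      omega
    · simp only [htI, if_neg hi, if_pos hj] at ht
      omega
    · simp only [htI, if_neg hi, if_neg hj] at ht
      exact Fin.ext (by omega)
  have hDmem : ∀ (i : Fin k) (α : Ordinal.{0}), α < omega1 → D i α ∈ 𝒜 := by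
    intro i α hα
    exact hBmem _ _ (hιlt _ hα)
  have hDne : ∀ (i j : Fin k) (α β : Ordinal.{0}), α < omega1 → β < omega1 →
      (i ≠ j ∨ α ≠ β) → D i α ≠ D j β := by
    intro i j α β hα hβ hcase
    rcases eq_or_ne (fI i) (fI j) with hf | hf
    · have hι' : ι (tI i) α ≠ ι (tI j) β := by
        intro hEq
        obtain ⟨hαβ, hst⟩ := hιinj _ _ _ _ hEq
        exact hcase.elim (fun hcc => hcc (hftInj i j hf hst)) (fun hcc => hcc hαβ)
      show B (fI i) (ι (tI i) α) ≠ B (fI j) (ι (tI j) β)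
      rw [hf]
      exact hBinj _ _ (hιlt _ hα) _ (hιlt _ hβ) hι'
    · exact hBcross _ _ hf _ (hιlt _ hα) _ (hιlt _ hβ)
  -- a bound at each level
  have hbd : ∀ α : Ordinal.{0}, α < omega1 → ∃ N : ℕ, m ≤ N ∧
      ∀ i j : Fin k, i ≠ j → D i α ∩ D j α ⊆ Set.Iio N := by
    intro α hα
    have hTfin : (⋃ p ∈ {p : Fin k × Fin k | p.1 ≠ p.2}, D p.1 α ∩ D p.2 α).Finite := by
      apply Set.Finite.biUnion (Set.toFinite _)
      intro p hp
      exact had _ (hDmem _ _ hα) _ (hDmem _ _ hα) (hDne _ _ _ _ hα hα (Or.inl hp))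
    obtain ⟨N0, hN0⟩ := hTfin.bddAbove
    refine ⟨max m (N0 + 1), le_max_left _ _, ?_⟩
    intro i j hij x hx
    have hxT : x ∈ ⋃ p ∈ {p : Fin k × Fin k | p.1 ≠ p.2}, D p.1 α ∩ D p.2 α :=
      Set.mem_biUnion (show (i, j) ∈ {p : Fin k × Fin k | p.1 ≠ p.2} from hij) hx
    have := hN0 hxT
    simp only [Set.mem_Iio]
    omega
  choose! N hNm hNsub using hbd
  -- the trace function and pigeonhole
  set τ : Ordinal.{0} → Fin n → Finset ℕ := fun α i =>
    (Finset.Ico m (N α)).filter (fun x => x ∈ B i (ι 0 α)) with hτ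
  set g : Ordinal.{0} → ℕ × (Fin n → Finset ℕ) := fun α => (N α, τ α) with hg
  have hIio : ¬ (Set.Iio omega1).Countable := by
    intro hc
    have := (Cardinal.countable_iff_lt_aleph_one _).1 hc
    rw [Ordinal.mk_Iio_ordinal] at this
    rw [omega1, Cardinal.card_ord, Cardinal.lift_aleph, Ordinal.lift_one] at this
    exact this.false
  have hfiber : ∃ c : ℕ × (Fin n → Finset ℕ),
      ¬ ({α ∈ Set.Iio omega1 | g α = c}).Countable := by
    by_contra hcon
    push_neg at hcon
    apply hIio
    have hsub : Set.Iio omega1 ⊆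
        ⋃ c : ℕ × (Fin n → Finset ℕ), {α ∈ Set.Iio omega1 | g α = c} := by
      intro α hα
      exact Set.mem_iUnion.2 ⟨g α, hα, rfl⟩
    exact (Set.countable_iUnion hcon).mono hsub
  obtain ⟨⟨m', τ'⟩, hS⟩ := hfiber
  set S : Set Ordinal.{0} := {α ∈ Set.Iio omega1 | g α = (m', τ')} with hSdef
  -- enumerate an uncountable subset of S by ω₁
  have hcard : #(Set.Iio omega1) ≤ #S := by
    rw [Ordinal.mk_Iio_ordinal, omega1, Cardinal.card_ord, Cardinal.lift_aleph,
      Ordinal.lift_one]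
    by_contra hlt
    push_neg at hlt
    exact hS ((Cardinal.countable_iff_lt_aleph_one _).2 hlt)
  obtain ⟨f⟩ := (Cardinal.le_def _ _).1 hcard
  set e : Ordinal.{0} → Ordinal.{0} :=
    fun ξ => if h : ξ < omega1 then ((f ⟨ξ, h⟩ : ↥S) : Ordinal.{0}) else 0 with he
  have heS : ∀ ξ, ξ < omega1 → e ξ ∈ S := by
    intro ξ hξ
    simp only [he, dif_pos hξ]
    exact (f ⟨ξ, hξ⟩).2
  have heLt : ∀ ξ, ξ < omega1 → e ξ < omega1 := fun ξ hξ => (heS ξ hξ).1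
  have heNτ : ∀ ξ, ξ < omega1 → N (e ξ) = m' ∧ τ (e ξ) = τ' := by
    intro ξ hξ
    have h2' := (heS ξ hξ).2
    simp only [hg, Prod.mk.injEq] at h2'
    exact h2'
  have heinj : ∀ ξ, ξ < omega1 → ∀ η, η < omega1 → ξ ≠ η → e ξ ≠ e η := by
    intro ξ hξ η hη hne hEq
    simp only [he, dif_pos hξ, dif_pos hη] at hEq
    exact hne (by simpa using congrArg Subtype.val (f.injective (Subtype.coe_injective hEq)))
  have hDcast : ∀ (i : Fin n) (γ : Ordinal.{0}),
      D (Fin.castLE hnk.le i) γ = B i (ι 0 γ) := by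
    intro i γ
    have hi : ((Fin.castLE hnk.le i : Fin k) : ℕ) < n := i.2
    show B (fI _) (ι (tI _) γ) = B i (ι 0 γ)
    simp only [hfI, htI, dif_pos hi, if_pos hi]
    rfl
  -- assemble the k-Luzin gap
  refine ⟨fun i α => D i (e α), ?_, ?_, ?_, m', ?_, ?_⟩
  · intro i α hα
    exact hDmem i _ (heLt α hα)
  · intro i α hα β hβ hαβ
    exact hDne i i _ _ (heLt α hα) (heLt β hβ) (Or.inr (heinj α hα β hβ hαβ))
  · intro i j hij α hα β hβ
    exact hDne i j _ _ (heLt α hα) (heLt β hβ) (Or.inl hij)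
  · -- condition (1)
    intro i j hij α hα
    have hsub := hNsub _ (heLt α hα) i j (ne_of_lt hij)
    rwa [(heNτ α hα).1] at hsub
  · -- condition (2)
    intro α hα β hβ hαβ hsub
    have hα' := heLt α hα
    have hβ' := heLt β hβ
    have hne : e α ≠ e β := heinj α hα β hβ hαβ
    have h2' := h2 (ι 0 (e α)) (hιlt 0 hα') (ι 0 (e β)) (hιlt 0 hβ')
      (fun hEq => hne (hιinj 0 0 _ _ hEq).1)
    rw [Set.not_subset] at h2'
    obtain ⟨x, hxU, hxm0⟩ := h2'
    simp only [Set.mem_iUnion] at hxU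
    obtain ⟨i, j, hij, hx1, hx2⟩ := hxU
    have hxm : m ≤ x := by simpa [Set.mem_Iio, not_lt] using hxm0
    have hxm' : m' ≤ x := by
      by_contra hlt
      push_neg at hlt
      -- x lies in the common trace, hence in B j (ι 0 (e α)) as well
      have hx2' : x ∈ τ (e β) j := by
        simp only [hτ, Finset.mem_filter, Finset.mem_Ico]
        exact ⟨⟨hxm, by rw [(heNτ β hβ).1]; exact hlt⟩, hx2⟩
      rw [(heNτ β hβ).2, ← (heNτ α hα).2] at hx2'
      have hx2'' : x ∈ B j (ι 0 (e α)) := by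
        simp only [hτ, Finset.mem_filter] at hx2'
        exact hx2'.2
      rcases hij.lt_or_gt with hij' | hij'
      · exact absurd (h1 i j hij' _ (hιlt 0 hα') ⟨hx1, hx2''⟩) (by simpa using hxm)
      · exact absurd (h1 j i hij' _ (hιlt 0 hα') ⟨hx2'', hx1⟩) (by simpa using hxm)
    have hxin : x ∈ ⋃ (i' : Fin k) (j' : Fin k) (_ : i' ≠ j'),
        D i' (e α) ∩ D j' (e β) := by
      simp only [Set.mem_iUnion]
      refine ⟨Fin.castLE hnk.le i, Fin.castLE hnk.le j,
        fun hEq => hij (Fin.castLE_injective hnk.le hEq), ?_, ?_⟩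
      · rw [hDcast]; exact hx1
      · rw [hDcast]; exact hx2
    exact absurd (hsub hxin) (not_lt.2 hxm')
end

section
/- Assume OCA. Suppose 𝒜 is an a.d.-family and n, k ∈ ℕ with 2 ≤ n < k. Then 𝒜 contains an n-Luzin gap if and only if 𝒜 contains a k-Luzin gap. -/
open Set Filter Cardinal

/-! ### Auxiliary machinery for statement 5 -/

section AuxStatement5

open Classical in
/-- Coding of a tuple of subsets of `ℕ` together with a natural number as a point
of Baire space `ℕ → ℕ`. -/
noncomputable def auxCode {r : ℕ} (D : Ordinal.{0} → Fin r → Set ℕ) (Mf : Ordinal.{0} → ℕ)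
    (ξ : Ordinal.{0}) : ℕ → ℕ := fun s =>
  if s = 0 then Mf ξ
  else if h : (Nat.unpair (s - 1)).1 < r then
    (if (Nat.unpair (s - 1)).2 ∈ D ξ ⟨(Nat.unpair (s - 1)).1, h⟩ then 1 else 0)
  else 0

theorem auxCode_zero {r : ℕ} (D : Ordinal.{0} → Fin r → Set ℕ) (Mf : Ordinal.{0} → ℕ)
    (ξ : Ordinal.{0}) : auxCode D Mf ξ 0 = Mf ξ := by
  simp [auxCode]

open Classical in
theorem auxCode_pair {r : ℕ} (D : Ordinal.{0} → Fin r → Set ℕ) (Mf : Ordinal.{0} → ℕ)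
    (ξ : Ordinal.{0}) (i : Fin r) (t : ℕ) :
    auxCode D Mf ξ (Nat.pair i.val t + 1) = if t ∈ D ξ i then 1 else 0 := by
  obtain ⟨iv, hiv⟩ := i
  unfold auxCode
  rw [if_neg (Nat.succ_ne_zero _)]
  have h2 : Nat.pair iv t + 1 - 1 = Nat.pair iv t := Nat.succ_sub_one _
  simp only [h2, Nat.unpair_pair]
  rw [dif_pos hiv]

open Classical in
theorem auxCode_pair_eq_one {r : ℕ} (D : Ordinal.{0} → Fin r → Set ℕ) (Mf : Ordinal.{0} → ℕ)
    (ξ : Ordinal.{0}) (i : Fin r) (t : ℕ) :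
    auxCode D Mf ξ (Nat.pair i.val t + 1) = 1 ↔ t ∈ D ξ i := by
  rw [auxCode_pair]
  by_cases h : t ∈ D ξ i <;> simp [h]

theorem omega1_uncountable : ¬(Set.Iio omega1).Countable := by
  rw [Cardinal.countable_iff_lt_aleph_one, Ordinal.mk_Iio_ordinal]
  have h1 : omega1.card = Cardinal.aleph 1 := Cardinal.card_ord _
  rw [h1]
  exact not_lt.mpr (Cardinal.aleph_one_le_lift.mpr le_rfl)

theorem uncount_pigeon {S : Set Ordinal.{0}} (hSc : ¬S.Countable) {ι : Type} [Countable ι]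
    (g : Ordinal.{0} → ι) : ∃ v, ¬{ξ ∈ S | g ξ = v}.Countable := by
  by_contra h
  push_neg at h
  apply hSc
  have hcov : S ⊆ ⋃ v : ι, {ξ ∈ S | g ξ = v} := fun ξ hξ => Set.mem_iUnion.mpr ⟨g ξ, hξ, rfl⟩
  exact Set.Countable.mono hcov (Set.countable_iUnion h)

theorem uncount_pair {S : Set Ordinal.{0}} (hSc : ¬S.Countable) :
    ∃ ξ ∈ S, ∃ η ∈ S, ξ ≠ η := by
  by_contra h
  push_neg at h
  exact hSc (Set.Subsingleton.countable h)

theorem exists_indexing (S : Set Ordinal.{0}) (hSc : ¬S.Countable) (r : ℕ) :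
    ∃ e : Ordinal.{0} → Fin (r + 1) → Ordinal.{0},
      (∀ ξ, ξ < omega1 → ∀ i, e ξ i ∈ S) ∧
      (∀ ξ, ξ < omega1 → ∀ η, η < omega1 → ∀ i j, e ξ i = e η j → ξ = η ∧ i = j) := by
  classical
  have h1 : Cardinal.aleph 1 ≤ Cardinal.mk ↥S :=
    not_lt.mp (fun hc => hSc ((Cardinal.countable_iff_lt_aleph_one S).mpr hc))
  have hl : Cardinal.lift.{1, 0} (Cardinal.aleph.{0} 1) = Cardinal.aleph.{1} 1 :=
    le_antisymm (Cardinal.lift_le_aleph_one.mpr le_rfl) (Cardinal.aleph_one_le_lift.mpr le_rfl)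
  have h2 : Cardinal.mk (↥(Set.Iio omega1) × ULift.{1} (Fin (r + 1))) ≤ Cardinal.aleph 1 := by
    rw [Cardinal.mk_prod, Cardinal.lift_id, Cardinal.lift_id, Ordinal.mk_Iio_ordinal,
      Cardinal.mk_uLift]
    have h3 : omega1.card = Cardinal.aleph 1 := Cardinal.card_ord _
    rw [h3, hl]
    have h4 : Cardinal.lift.{1} (Cardinal.mk (Fin (r + 1))) ≤ Cardinal.aleph 1 := by
      have h5 : Cardinal.mk (Fin (r + 1)) ≤ Cardinal.aleph0 := (Cardinal.lt_aleph0_of_finite _).le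
      refine le_trans (Cardinal.lift_le.mpr h5) ?_
      rw [Cardinal.lift_aleph0]
      exact Cardinal.aleph0_lt_aleph_one.le
    refine le_trans (Cardinal.mul_le_max _ _) ?_
    exact sup_le (sup_le le_rfl h4) Cardinal.aleph0_lt_aleph_one.le
  obtain ⟨f⟩ := (Cardinal.le_def _ _).mp (h2.trans h1)
  refine ⟨fun ξ i => if h : ξ < omega1 then (f (⟨ξ, h⟩, ⟨i⟩)).val else 0, ?_, ?_⟩
  · intro ξ hξ i
    dsimp only
    rw [dif_pos hξ]
    exact (f (⟨ξ, hξ⟩, ⟨i⟩)).property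
  · intro ξ hξ η hη i j hEq
    dsimp only at hEq
    rw [dif_pos hξ, dif_pos hη] at hEq
    have h4 := f.injective (Subtype.val_injective hEq)
    have h5 : (⟨ξ, hξ⟩ : ↥(Set.Iio omega1)) = ⟨η, hη⟩ := congrArg Prod.fst h4
    have h6 : (⟨i⟩ : ULift.{1} (Fin (r + 1))) = ⟨j⟩ := congrArg Prod.snd h4
    exact ⟨congrArg Subtype.val h5, congrArg ULift.down h6⟩


theorem keyOCA (hOCA : OCA) {r : ℕ} (D : Ordinal.{0} → Fin r → Set ℕ) (Mf : Ordinal.{0} → ℕ)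
    (Q : ℕ → ℕ → Fin r → Fin r → ℕ → Prop)
    (hQ : ∀ Mx My i j t, Q Mx My i j t → Q My Mx j i t)
    (S : Set Ordinal.{0}) (hSc : ¬S.Countable)
    (hinj : ∀ ξ ∈ S, ∀ η ∈ S, ξ ≠ η → D ξ ≠ D η) :
    (∃ T ⊆ S, ¬T.Countable ∧ ∀ ξ ∈ T, ∀ η ∈ T, ξ ≠ η →
        ∃ i j t, Q (Mf ξ) (Mf η) i j t ∧ t ∈ D ξ i ∧ t ∈ D η j) ∨
    (∃ T ⊆ S, ¬T.Countable ∧ ∀ ξ ∈ T, ∀ η ∈ T, ξ ≠ η →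
        ¬ ∃ i j t, Q (Mf ξ) (Mf η) i j t ∧ t ∈ D ξ i ∧ t ∈ D η j) := by
  classical
  letI : MetricSpace (ℕ → ℕ) := PiNat.metricSpaceNatNat
  set c : Ordinal.{0} → ℕ → ℕ := auxCode D Mf with hcdef
  have hcinj : ∀ ξ ∈ S, ∀ η ∈ S, ξ ≠ η → c ξ ≠ c η := by
    intro ξ hξ η hη hne heq
    apply hinj ξ hξ η hη hne
    funext i
    ext t
    have h2 := congrFun heq (Nat.pair i.val t + 1)
    rw [hcdef] at h2
    rw [auxCode_pair, auxCode_pair] at h2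
    constructor
    · intro h3
      by_contra h4
      rw [if_pos h3, if_neg h4] at h2
      exact one_ne_zero h2
    · intro h3
      by_contra h4
      rw [if_neg h4, if_pos h3] at h2
      exact one_ne_zero h2.symm
  have hSne : S.Nonempty := by
    rcases S.eq_empty_or_nonempty with h | h
    · exact absurd (h ▸ Set.countable_empty) hSc
    · exact h
  set Xs : Set (ℕ → ℕ) := c '' S with hXsdef
  haveI hXne : Nonempty ↥Xs := ⟨⟨c hSne.choose, ⟨hSne.choose, hSne.choose_spec, rfl⟩⟩⟩
  have hsep : TopologicalSpace.SeparableSpace ↥Xs := by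
    set pick : (Σ nn : ℕ, Fin nn → ℕ) → ↥Xs := fun w =>
      if h : ∃ y : ↥Xs, ∀ s : Fin w.1, y.val s.val = w.2 s then h.choose
      else Classical.arbitrary _ with hpick
    refine ⟨⟨Set.range pick, Set.countable_range _, ?_⟩⟩
    rw [Metric.dense_iff]
    intro x ε hε
    obtain ⟨nn, hnn⟩ := exists_pow_lt_of_lt_one hε (by norm_num : (1 / 2 : ℝ) < 1)
    have hex : ∃ y : ↥Xs, ∀ s : Fin (⟨nn, fun i : Fin nn => x.val i.val⟩ : Σ nn : ℕ, Fin nn → ℕ).1,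
        y.val s.val = (⟨nn, fun i : Fin nn => x.val i.val⟩ : Σ nn : ℕ, Fin nn → ℕ).2 s :=
      ⟨x, fun s => rfl⟩
    refine ⟨pick ⟨nn, fun i : Fin nn => x.val i.val⟩, ?_, Set.mem_range_self _⟩
    rw [Metric.mem_ball]
    have hpeq : pick ⟨nn, fun i : Fin nn => x.val i.val⟩ = hex.choose := by
      rw [hpick]; exact dif_pos hex
    rw [hpeq]
    have hp := hex.choose_spec
    have hcyl : (hex.choose : ↥Xs).val ∈ PiNat.cylinder x.val nn := by
      intro i hi
      exact hp ⟨i, hi⟩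
    have hdist : dist hex.choose.val x.val ≤ (1 / 2) ^ nn :=
      PiNat.mem_cylinder_iff_dist_le.mp hcyl
    calc dist (hex.choose : ↥Xs) x = dist hex.choose.val x.val := Subtype.dist_eq _ _
      _ ≤ (1 / 2) ^ nn := hdist
      _ < ε := hnn
  set K : Set (↥Xs × ↥Xs) :=
    {pq | ∃ i j t, Q (pq.1.val 0) (pq.2.val 0) i j t ∧
        pq.1.val (Nat.pair i.val t + 1) = 1 ∧ pq.2.val (Nat.pair j.val t + 1) = 1} with hKdef
  have hKopen : IsOpen K := by
    rw [Metric.isOpen_iff]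
    rintro ⟨u, v⟩ ⟨i, j, t, hq, hu, hv⟩
    refine ⟨(1 / 2) ^ max (Nat.pair i.val t + 1) (Nat.pair j.val t + 1), by positivity, ?_⟩
    rintro ⟨u', v'⟩ hmem
    rw [Metric.mem_ball, Prod.dist_eq] at hmem
    have h1 : dist u'.val u.val < (1 / 2) ^ max (Nat.pair i.val t + 1) (Nat.pair j.val t + 1) := by
      rw [← Subtype.dist_eq]; exact (max_lt_iff.mp hmem).1
    have h2 : dist v'.val v.val < (1 / 2) ^ max (Nat.pair i.val t + 1) (Nat.pair j.val t + 1) := by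
      rw [← Subtype.dist_eq]; exact (max_lt_iff.mp hmem).2
    have e0u : u'.val 0 = u.val 0 := PiNat.apply_eq_of_dist_lt h1 (Nat.zero_le _)
    have e0v : v'.val 0 = v.val 0 := PiNat.apply_eq_of_dist_lt h2 (Nat.zero_le _)
    have e1u : u'.val (Nat.pair i.val t + 1) = u.val (Nat.pair i.val t + 1) :=
      PiNat.apply_eq_of_dist_lt h1 (le_max_left _ _)
    have e1v : v'.val (Nat.pair j.val t + 1) = v.val (Nat.pair j.val t + 1) :=
      PiNat.apply_eq_of_dist_lt h2 (le_max_right _ _)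
    exact ⟨i, j, t, by rw [e0u, e0v]; exact hq, by rw [e1u]; exact hu, by rw [e1v]; exact hv⟩
  have hKsymm : ∀ x y : ↥Xs, (x, y) ∈ K → (y, x) ∈ K := by
    rintro x y ⟨i, j, t, hq, h1, h2⟩
    exact ⟨j, i, t, hQ _ _ _ _ _ hq, h2, h1⟩
  have hc0 : ∀ ξ, c ξ 0 = Mf ξ := fun ξ => auxCode_zero D Mf ξ
  have hcpair : ∀ ξ (i : Fin r) t, (c ξ (Nat.pair i.val t + 1) = 1 ↔ t ∈ D ξ i) :=
    fun ξ i t => auxCode_pair_eq_one D Mf ξ i t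
  rcases hOCA ↥Xs hsep K hKopen hKsymm with ⟨Y, hYc, hY⟩ | ⟨C, hCu, hC⟩
  · left
    refine ⟨{ξ ∈ S | c ξ ∈ Subtype.val '' Y}, fun ξ h => h.1, ?_, ?_⟩
    · intro hcT
      apply hYc
      have h1 : Subtype.val '' Y ⊆ c '' {ξ ∈ S | c ξ ∈ Subtype.val '' Y} := by
        rintro u ⟨y, hyY, rfl⟩
        obtain ⟨ξ, hξS, hξ⟩ := y.property
        exact ⟨ξ, ⟨hξS, by rw [hξ]; exact ⟨y, hyY, rfl⟩⟩, hξ⟩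
      have h2 : (Subtype.val '' Y).Countable := Set.Countable.mono h1 (hcT.image c)
      have h3 := h2.preimage (Subtype.val_injective (p := (· ∈ Xs)))
      exact Set.Countable.mono (Set.subset_preimage_image _ _) h3
    · rintro ξ ⟨hξS, hξY⟩ η ⟨hηS, hηY⟩ hne
      obtain ⟨y1, hy1Y, hy1⟩ := hξY
      obtain ⟨y2, hy2Y, hy2⟩ := hηY
      have hy12 : y1 ≠ y2 := by
        intro h; apply hcinj ξ hξS η hηS hne; rw [← hy1, ← hy2, h]
      obtain ⟨i, j, t, hq, h1, h2⟩ := hY y1 hy1Y y2 hy2Y hy12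
      rw [hy1] at hq h1
      rw [hy2] at hq h2
      rw [hc0, hc0] at hq
      exact ⟨i, j, t, hq, (hcpair ξ i t).mp h1, (hcpair η j t).mp h2⟩
  · right
    have hcov : S ⊆ ⋃ nn : ℕ, {ξ ∈ S | c ξ ∈ Subtype.val '' C nn} := by
      intro ξ hξ
      have h1 : (⟨c ξ, ⟨ξ, hξ, rfl⟩⟩ : ↥Xs) ∈ ⋃ nn, C nn := by rw [hCu]; trivial
      obtain ⟨nn, hnn⟩ := Set.mem_iUnion.mp h1
      exact Set.mem_iUnion.mpr ⟨nn, hξ, ⟨_, hnn, rfl⟩⟩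
    have hex : ∃ nn, ¬{ξ ∈ S | c ξ ∈ Subtype.val '' C nn}.Countable := by
      by_contra h
      push_neg at h
      exact hSc (Set.Countable.mono hcov (Set.countable_iUnion h))
    obtain ⟨nn, hnn⟩ := hex
    refine ⟨_, fun ξ h => h.1, hnn, ?_⟩
    rintro ξ ⟨hξS, y1, hy1C, hy1⟩ η ⟨hηS, y2, hy2C, hy2⟩ hne ⟨i, j, t, hq, h1, h2⟩
    have hy12 : y1 ≠ y2 := by
      intro h; apply hcinj ξ hξS η hηS hne; rw [← hy1, ← hy2, h]
    apply hC nn y1 hy1C y2 hy2C hy12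
    refine ⟨i, j, t, ?_, ?_, ?_⟩
    · rw [hy1, hy2, hc0, hc0]; exact hq
    · rw [hy1]; exact (hcpair ξ i t).mpr h1
    · rw [hy2]; exact (hcpair η j t).mpr h2

set_option maxHeartbeats 1000000 in
theorem gap_down (hOCA : OCA) {𝒜 : Set (Set ℕ)} (h𝒜 : ADFamily 𝒜) {p q : ℕ}
    (hq2 : 2 ≤ q) (hqp : q ≤ p) (h : ContainsNLuzinGap 𝒜 p) : ContainsNLuzinGap 𝒜 q := by
  classical
  obtain ⟨B, hBmem, hBinj1, hBinj2, m, hm1, hm2⟩ := h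
  have hp2 : 2 ≤ p := hq2.trans hqp
  have key : ∀ l : List (Fin p × Fin p), ∀ S : Set Ordinal.{0}, S ⊆ Set.Iio omega1 →
      ¬S.Countable →
      (∃ i0 j0 : Fin p, i0 ≠ j0 ∧ ∃ T, T ⊆ Set.Iio omega1 ∧ ¬T.Countable ∧
        ∀ ξ ∈ T, ∀ η ∈ T, ξ ≠ η →
          ∃ t, m ≤ t ∧ ((t ∈ B i0 ξ ∧ t ∈ B j0 η) ∨ (t ∈ B j0 ξ ∧ t ∈ B i0 η))) ∨
      (∃ T, T ⊆ S ∧ ¬T.Countable ∧ ∀ ξ ∈ T, ∀ η ∈ T, ξ ≠ η →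
        ∀ pr ∈ l, pr.1 ≠ pr.2 →
          ¬∃ t, m ≤ t ∧ ((t ∈ B pr.1 ξ ∧ t ∈ B pr.2 η) ∨ (t ∈ B pr.2 ξ ∧ t ∈ B pr.1 η))) := by
    intro l
    induction l with
    | nil =>
      intro S hS1 hS2
      right
      exact ⟨S, subset_rfl, hS2, fun ξ _ η _ _ pr hpr => absurd hpr List.not_mem_nil⟩
    | cons pr l ih =>
      intro S hS1 hS2
      rcases ih S hS1 hS2 with hdone | ⟨T, hTS, hTc, hT⟩
      · exact Or.inl hdone
      have hTsub : T ⊆ Set.Iio omega1 := hTS.trans hS1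
      by_cases hprne : pr.1 = pr.2
      · right
        refine ⟨T, hTS, hTc, ?_⟩
        intro ξ hξ η hη hne pr' hpr' hne'
        rcases List.mem_cons.mp hpr' with h' | hpr'
        · exact absurd (h' ▸ hprne) hne'
        · exact hT ξ hξ η hη hne pr' hpr' hne'
      · have hinj : ∀ ξ ∈ T, ∀ η ∈ T, ξ ≠ η →
            (fun i : Fin p => B i ξ) ≠ (fun i : Fin p => B i η) := by
          intro ξ hξ η hη hne heq
          exact hBinj1 ⟨0, by omega⟩ ξ (hTsub hξ) η (hTsub hη) hne (congrFun heq _)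
        rcases keyOCA hOCA (fun ξ i => B i ξ) (fun _ => 0)
            (fun _ _ i j t => m ≤ t ∧ ((i = pr.1 ∧ j = pr.2) ∨ (i = pr.2 ∧ j = pr.1)))
            (fun Mx My i j t ht =>
              ⟨ht.1, ht.2.elim (fun h' => Or.inr ⟨h'.2, h'.1⟩) (fun h' => Or.inl ⟨h'.2, h'.1⟩)⟩)
            T hTc hinj with
          ⟨T', hT'T, hT'c, hL⟩ | ⟨T', hT'T, hT'c, hNL⟩
        · left
          refine ⟨pr.1, pr.2, hprne, T', hT'T.trans hTsub, hT'c, ?_⟩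
          intro ξ hξ η hη hne
          obtain ⟨i, j, t, ⟨htm, hcase⟩, h1, h2⟩ := hL ξ hξ η hη hne
          rcases hcase with ⟨hi, hj⟩ | ⟨hi, hj⟩
          · exact ⟨t, htm, Or.inl ⟨hi ▸ h1, hj ▸ h2⟩⟩
          · exact ⟨t, htm, Or.inr ⟨hi ▸ h1, hj ▸ h2⟩⟩
        · right
          refine ⟨T', hT'T.trans hTS, hT'c, ?_⟩
          intro ξ hξ η hη hne pr' hpr' hne'
          rcases List.mem_cons.mp hpr' with h' | hpr'
          · subst h'
            rintro ⟨t, htm, hcase⟩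
            apply hNL ξ hξ η hη hne
            rcases hcase with ⟨h1, h2⟩ | ⟨h1, h2⟩
            · exact ⟨pr'.1, pr'.2, t, ⟨htm, Or.inl ⟨rfl, rfl⟩⟩, h1, h2⟩
            · exact ⟨pr'.2, pr'.1, t, ⟨htm, Or.inr ⟨rfl, rfl⟩⟩, h1, h2⟩
          · exact hT ξ (hT'T hξ) η (hT'T hη) hne pr' hpr' hne'
  rcases key ((List.finRange p).flatMap fun i => (List.finRange p).map fun j => (i, j))
      (Set.Iio omega1) subset_rfl omega1_uncountable with
    ⟨i0, j0, hij, T, hTsub, hTc, hT⟩ | ⟨T, hTsub', hTc, hT⟩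
  swap
  · exfalso
    obtain ⟨ξ, hξ, η, hη, hne⟩ := uncount_pair hTc
    obtain ⟨t, htU, htm⟩ := Set.not_subset.mp
      (hm2 ξ (hTsub' hξ) η (hTsub' hη) hne)
    simp only [Set.mem_iUnion] at htU
    obtain ⟨i, j, hijne, hti, htj⟩ := htU
    have hmem : (i, j) ∈ (List.finRange p).flatMap fun i => (List.finRange p).map fun j => (i, j) := by
      rw [List.mem_flatMap]
      exact ⟨i, List.mem_finRange i, List.mem_map.mpr ⟨j, List.mem_finRange j, rfl⟩⟩
    have htm' : m ≤ t := not_lt.mp (fun hc => htm (Set.mem_Iio.mpr hc))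
    exact hT ξ hξ η hη hne (i, j) hmem hijne ⟨t, htm', Or.inl ⟨hti, htj⟩⟩
  · obtain ⟨e, hemem, heinj⟩ := exists_indexing T hTc 0
    have heT : ∀ α, α < omega1 → e α ⟨0, by omega⟩ ∈ T := fun α hα => hemem α hα _
    have helt : ∀ α, α < omega1 → e α ⟨0, by omega⟩ < omega1 := fun α hα => hTsub (heT α hα)
    obtain ⟨cmap, hcinj, hc0, hc1⟩ : ∃ c : Fin q → Fin p, Function.Injective c ∧
        c ⟨0, by omega⟩ = i0 ∧ c ⟨1, by omega⟩ = j0 := by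
      have hb : (Equiv.swap (⟨0, by omega⟩ : Fin p) i0).symm j0 ≠ ⟨0, by omega⟩ := by
        intro hc
        apply hij
        have h' := congrArg (Equiv.swap (⟨0, by omega⟩ : Fin p) i0) hc
        rw [Equiv.apply_symm_apply, Equiv.swap_apply_left] at h'
        exact h'.symm
      refine ⟨fun a => ((Equiv.swap (⟨1, by omega⟩ : Fin p)
          ((Equiv.swap (⟨0, by omega⟩ : Fin p) i0).symm j0)).trans
          (Equiv.swap (⟨0, by omega⟩ : Fin p) i0)) (Fin.castLE hqp a), ?_, ?_, ?_⟩
      · intro a b hab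
        exact Fin.castLE_injective hqp (Equiv.injective _ hab)
      · show ((Equiv.swap (⟨1, by omega⟩ : Fin p)
          ((Equiv.swap (⟨0, by omega⟩ : Fin p) i0).symm j0)).trans
          (Equiv.swap (⟨0, by omega⟩ : Fin p) i0)) ⟨0, by omega⟩ = i0
        simp only [Equiv.trans_apply]
        rw [Equiv.swap_apply_of_ne_of_ne
          (by intro hc; exact absurd (congrArg Fin.val hc) (by simp))
          (fun hc => hb hc.symm), Equiv.swap_apply_left]
      · show ((Equiv.swap (⟨1, by omega⟩ : Fin p)
          ((Equiv.swap (⟨0, by omega⟩ : Fin p) i0).symm j0)).trans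
          (Equiv.swap (⟨0, by omega⟩ : Fin p) i0)) ⟨1, by omega⟩ = j0
        simp only [Equiv.trans_apply]
        rw [Equiv.swap_apply_left, Equiv.apply_symm_apply]
    refine ⟨fun a α => B (cmap a) (e α ⟨0, by omega⟩), ?_, ?_, ?_, m, ?_, ?_⟩
    · intro i α hα
      exact hBmem (cmap i) _ (helt α hα)
    · intro i α hα β hβ hne
      exact hBinj1 (cmap i) _ (helt α hα) _ (helt β hβ)
        (fun hEq => hne (heinj α hα β hβ _ _ hEq).1)
    · intro i j hne α hα β hβ
      exact hBinj2 (cmap i) (cmap j) (fun h' => hne (hcinj h')) _ (helt α hα) _ (helt β hβ)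
    · intro i j hij' α hα
      have hcc : cmap i ≠ cmap j := fun h' => hij'.ne (hcinj h')
      show B (cmap i) (e α ⟨0, by omega⟩) ∩ B (cmap j) (e α ⟨0, by omega⟩) ⊆ Set.Iio m
      rcases lt_or_gt_of_ne hcc with hlt | hgt
      · exact hm1 (cmap i) (cmap j) hlt (e α ⟨0, by omega⟩) (helt α hα)
      · rw [Set.inter_comm]
        exact hm1 (cmap j) (cmap i) hgt (e α ⟨0, by omega⟩) (helt α hα)
    · intro α hα β hβ hne
      obtain ⟨t, htm, hcase⟩ := hT (e α ⟨0, by omega⟩) (heT α hα) (e β ⟨0, by omega⟩) (heT β hβ)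
        (fun hEq => hne (heinj α hα β hβ _ _ hEq).1)
      rw [Set.not_subset]
      have hne01 : (⟨0, by omega⟩ : Fin q) ≠ ⟨1, by omega⟩ := by
        intro hc; exact absurd (congrArg Fin.val hc) (by simp)
      rcases hcase with ⟨h1, h2⟩ | ⟨h1, h2⟩
      · refine ⟨t, ?_, fun hc => absurd (Set.mem_Iio.mp hc) (not_lt.mpr htm)⟩
        refine Set.mem_iUnion.mpr ⟨⟨0, by omega⟩, Set.mem_iUnion.mpr ⟨⟨1, by omega⟩,
          Set.mem_iUnion.mpr ⟨hne01, ?_⟩⟩⟩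
        show t ∈ B (cmap ⟨0, by omega⟩) (e α ⟨0, by omega⟩) ∩
          B (cmap ⟨1, by omega⟩) (e β ⟨0, by omega⟩)
        rw [hc0, hc1]
        exact ⟨h1, h2⟩
      · refine ⟨t, ?_, fun hc => absurd (Set.mem_Iio.mp hc) (not_lt.mpr htm)⟩
        refine Set.mem_iUnion.mpr ⟨⟨1, by omega⟩, Set.mem_iUnion.mpr ⟨⟨0, by omega⟩,
          Set.mem_iUnion.mpr ⟨hne01.symm, ?_⟩⟩⟩
        show t ∈ B (cmap ⟨1, by omega⟩) (e α ⟨0, by omega⟩) ∩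
          B (cmap ⟨0, by omega⟩) (e β ⟨0, by omega⟩)
        rw [hc0, hc1]
        exact ⟨h1, h2⟩

set_option maxHeartbeats 1000000 in
theorem gap_up (hOCA : OCA) {𝒜 : Set (Set ℕ)} (h𝒜 : ADFamily 𝒜) {p q : ℕ}
    (hp2 : 2 ≤ p) (hpq : p ≤ q) (h : ContainsNLuzinGap 𝒜 p) : ContainsNLuzinGap 𝒜 q := by
  classical
  obtain ⟨B, hBmem, hBinj1, hBinj2, m, hm1, hm2⟩ := h
  have hq2 : 2 ≤ q := hp2.trans hpq
  obtain ⟨g, hgmem, hginj⟩ := exists_indexing (Set.Iio omega1) omega1_uncountable (q - p)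
  have hgmem' : ∀ ξ, ξ < omega1 → ∀ s, g ξ s < omega1 := fun ξ hξ s => hgmem ξ hξ s
  -- slot functions
  obtain ⟨sf, si, hsf_lt, hsi_lt, hsi_ge, hslot⟩ :
      ∃ (sf : Fin q → Fin p) (si : Fin q → Fin (q - p + 1)),
        (∀ i : Fin q, ∀ h' : i.val < p, sf i = ⟨i.val, h'⟩) ∧
        (∀ i : Fin q, i.val < p → si i = ⟨0, by omega⟩) ∧
        (∀ i : Fin q, ¬i.val < p → (si i).val = i.val - p + 1) ∧
        (∀ i j : Fin q, sf i = sf j → si i = si j → i = j) := by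
    refine ⟨fun i => if h' : i.val < p then ⟨i.val, h'⟩ else ⟨0, by omega⟩,
      fun i => if h' : i.val < p then ⟨0, by omega⟩
        else ⟨i.val - p + 1, by have := i.isLt; omega⟩, ?_, ?_, ?_, ?_⟩
    · intro i h'; dsimp only; rw [dif_pos h']
    · intro i h'; dsimp only; rw [dif_pos h']
    · intro i h'; dsimp only; rw [dif_neg h']
    · intro i j hf hs
      dsimp only at hf hs
      by_cases h1 : i.val < p <;> by_cases h2 : j.val < p
      · rw [dif_pos h1, dif_pos h2] at hf
        rw [Fin.mk.injEq] at hf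
        exact Fin.ext hf
      · rw [dif_pos h1, dif_neg h2] at hs
        rw [Fin.mk.injEq] at hs
        omega
      · rw [dif_neg h1, dif_pos h2] at hs
        rw [Fin.mk.injEq] at hs
        omega
      · rw [dif_neg h1, dif_neg h2] at hs
        rw [Fin.mk.injEq] at hs
        have hi := i.isLt
        have hj := j.isLt
        exact Fin.ext (by omega)
  set D : Ordinal.{0} → Fin q → Set ℕ := fun ξ i => B (sf i) (g ξ (si i)) with hD
  have hDne : ∀ ξ, ξ < omega1 → ∀ η, η < omega1 → ∀ i j : Fin q,
      ¬(ξ = η ∧ i = j) → D ξ i ≠ D η j := by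
    intro ξ hξ η hη i j hne
    by_cases hf : sf i = sf j
    · have hsine : g ξ (si i) ≠ g η (si j) := by
        intro hEq
        obtain ⟨hξη, hsij⟩ := hginj ξ hξ η hη _ _ hEq
        exact hne ⟨hξη, hslot i j hf hsij⟩
      show B (sf i) (g ξ (si i)) ≠ B (sf j) (g η (si j))
      rw [hf]
      exact hBinj1 (sf j) _ (hgmem' ξ hξ (si i)) _ (hgmem' η hη (si j)) hsine
    · exact hBinj2 (sf i) (sf j) hf _ (hgmem' ξ hξ (si i)) _ (hgmem' η hη (si j))
  have hMex : ∀ ξ, ξ < omega1 → ∃ M : ℕ, ∀ i j : Fin q, i ≠ j → D ξ i ∩ D ξ j ⊆ Set.Iio M := by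
    intro ξ hξ
    have hbd : ∀ pr : Fin q × Fin q, ∃ M : ℕ, pr.1 ≠ pr.2 → D ξ pr.1 ∩ D ξ pr.2 ⊆ Set.Iio M := by
      intro pr
      by_cases hne : pr.1 = pr.2
      · exact ⟨0, fun hc => absurd hne hc⟩
      · have hfin : (D ξ pr.1 ∩ D ξ pr.2).Finite :=
          h𝒜.2.2 _ (hBmem _ _ (hgmem' ξ hξ _)) _ (hBmem _ _ (hgmem' ξ hξ _))
            (hDne ξ hξ ξ hξ pr.1 pr.2 (fun hc => hne hc.2))
        obtain ⟨b, hb⟩ := hfin.bddAbove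
        refine ⟨b + 1, fun _ x hx => ?_⟩
        have := hb hx
        simp only [Set.mem_Iio]
        omega
    choose F hF using hbd
    refine ⟨Finset.univ.sup F, fun i j hne x hx => ?_⟩
    have h1 := hF (i, j) hne hx
    have h2 : F (i, j) ≤ Finset.univ.sup F := Finset.le_sup (Finset.mem_univ _)
    simp only [Set.mem_Iio] at h1 ⊢
    omega
  obtain ⟨Mf, hMfspec⟩ : ∃ Mf : Ordinal.{0} → ℕ, ∀ ξ, ξ < omega1 →
      ∀ i j : Fin q, i ≠ j → D ξ i ∩ D ξ j ⊆ Set.Iio (Mf ξ) := by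
    refine ⟨fun ξ => if h' : ξ < omega1 then (hMex ξ h').choose else 0, fun ξ h' i j hne => ?_⟩
    simp only [dif_pos h']
    exact (hMex ξ h').choose_spec i j hne
  have hinj : ∀ ξ ∈ Set.Iio omega1, ∀ η ∈ Set.Iio omega1, ξ ≠ η → D ξ ≠ D η := by
    intro ξ hξ η hη hne heq
    exact hDne ξ hξ η hη ⟨0, by omega⟩ ⟨0, by omega⟩ (fun hc => hne hc.1) (congrFun heq _)
  rcases keyOCA hOCA D Mf (fun Mx My i j t => i ≠ j ∧ max Mx My ≤ t)
      (fun Mx My i j t ht => ⟨fun hc => ht.1 hc.symm, by rw [max_comm]; exact ht.2⟩)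
      (Set.Iio omega1) omega1_uncountable hinj with
    ⟨T, hTsub, hTc, hL⟩ | ⟨T, hTsub, hTc, hNL⟩
  · -- the k-gap
    obtain ⟨M0, hM0⟩ := uncount_pigeon hTc Mf
    obtain ⟨e, hemem, heinj⟩ := exists_indexing {ξ ∈ T | Mf ξ = M0} hM0 0
    have heT : ∀ α, α < omega1 → e α ⟨0, by omega⟩ ∈ T := fun α hα => (hemem α hα _).1
    have heM : ∀ α, α < omega1 → Mf (e α ⟨0, by omega⟩) = M0 := fun α hα => (hemem α hα _).2
    have helt : ∀ α, α < omega1 → e α ⟨0, by omega⟩ < omega1 := fun α hα => hTsub (heT α hα)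
    refine ⟨fun i α => D (e α ⟨0, by omega⟩) i, ?_, ?_, ?_, M0, ?_, ?_⟩
    · intro i α hα
      exact hBmem _ _ (hgmem' _ (helt α hα) _)
    · intro i α hα β hβ hne
      exact hDne _ (helt α hα) _ (helt β hβ) i i
        (fun hc => hne (heinj α hα β hβ _ _ hc.1).1)
    · intro i j hne α hα β hβ
      exact hDne _ (helt α hα) _ (helt β hβ) i j (fun hc => hne hc.2)
    · intro i j hij' α hα
      have h1 := hMfspec (e α ⟨0, by omega⟩) (helt α hα) i j (Fin.ne_of_lt hij')
      rw [heM α hα] at h1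
      exact h1
    · intro α hα β hβ hne
      have hene : e α ⟨0, by omega⟩ ≠ e β ⟨0, by omega⟩ :=
        fun hc => hne (heinj α hα β hβ _ _ hc).1
      obtain ⟨i, j, t, ⟨hij', hmax⟩, h1, h2⟩ :=
        hL _ (heT α hα) _ (heT β hβ) hene
      rw [Set.not_subset]
      refine ⟨t, ?_, ?_⟩
      · exact Set.mem_iUnion.mpr ⟨i, Set.mem_iUnion.mpr ⟨j, Set.mem_iUnion.mpr ⟨hij', h1, h2⟩⟩⟩
      · intro hc
        rw [Set.mem_Iio] at hc
        rw [heM α hα, heM β hβ, max_self] at hmax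
        omega
  · -- contradiction via traces
    exfalso
    obtain ⟨M0, hM0⟩ := uncount_pigeon hTc Mf
    obtain ⟨v, hv⟩ := uncount_pigeon hM0
      (fun ξ => (fun (a : Fin p) (t : Fin M0) => (t : ℕ) ∈ B a (g ξ ⟨0, by omega⟩)))
    obtain ⟨ξ, hξ, η, hη, hne⟩ := uncount_pair hv
    obtain ⟨⟨hξT, hξM⟩, hξτ⟩ := hξ
    obtain ⟨⟨hηT, hηM⟩, hητ⟩ := hη
    have hξ1 : ξ < omega1 := hTsub hξT
    have hη1 : η < omega1 := hTsub hηT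
    have hab : g ξ ⟨0, by omega⟩ ≠ g η ⟨0, by omega⟩ :=
      fun hc => hne (hginj ξ hξ1 η hη1 _ _ hc).1
    obtain ⟨t, htU, htm⟩ := Set.not_subset.mp
      (hm2 (g ξ ⟨0, by omega⟩) (hgmem' ξ hξ1 _) (g η ⟨0, by omega⟩) (hgmem' η hη1 _) hab)
    simp only [Set.mem_iUnion] at htU
    obtain ⟨i, j, hijne, hti, htj⟩ := htU
    have htm' : m ≤ t := not_lt.mp (fun hc => htm (Set.mem_Iio.mpr hc))
    have hcastlt : ∀ a : Fin p, (Fin.castLE (hpq.trans (le_refl q)) a).val < p := fun a => a.isLt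
    have hDi : D ξ (Fin.castLE hpq i) = B i (g ξ ⟨0, by omega⟩) := by
      show B (sf (Fin.castLE hpq i)) (g ξ (si (Fin.castLE hpq i))) = B i (g ξ ⟨0, by omega⟩)
      rw [hsf_lt (Fin.castLE hpq i) i.isLt, hsi_lt (Fin.castLE hpq i) i.isLt]
      rfl
    have hDj : D η (Fin.castLE hpq j) = B j (g η ⟨0, by omega⟩) := by
      show B (sf (Fin.castLE hpq j)) (g η (si (Fin.castLE hpq j))) = B j (g η ⟨0, by omega⟩)
      rw [hsf_lt (Fin.castLE hpq j) j.isLt, hsi_lt (Fin.castLE hpq j) j.isLt]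
      rfl
    have hcast : Fin.castLE hpq i ≠ Fin.castLE hpq j :=
      fun hc => hijne (Fin.castLE_injective hpq hc)
    have htM : t < M0 := by
      by_contra hge
      apply hNL ξ hξT η hηT hne
      refine ⟨Fin.castLE hpq i, Fin.castLE hpq j, t, ⟨hcast, ?_⟩, ?_, ?_⟩
      · rw [hξM, hηM, max_self]
        exact not_lt.mp hge
      · rw [hDi]; exact hti
      · rw [hDj]; exact htj
    have htrace : t ∈ B i (g η ⟨0, by omega⟩) := by
      have h1 := congrFun (congrFun (hξτ.trans hητ.symm) i) ⟨t, htM⟩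
      simp only at h1
      exact h1 ▸ hti
    rcases lt_or_gt_of_ne hijne with hlt | hgt
    · have h2 := hm1 i j hlt (g η ⟨0, by omega⟩) (hgmem' η hη1 _) ⟨htrace, htj⟩
      rw [Set.mem_Iio] at h2
      omega
    · have h2 := hm1 j i hgt (g η ⟨0, by omega⟩) (hgmem' η hη1 _) ⟨htj, htrace⟩
      rw [Set.mem_Iio] at h2
      omega

end AuxStatement5
/-- under OCA, for `2 ≤ n < k`, an a.d.-family contains an `n`-Luzin gap
iff it contains a `k`-Luzin gap. -/
theorem statement5 (hOCA : OCA) (𝒜 : Set (Set ℕ)) (h𝒜 : ADFamily 𝒜) (n k : ℕ)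
    (hn : 2 ≤ n) (hnk : n < k) :
    ContainsNLuzinGap 𝒜 n ↔ ContainsNLuzinGap 𝒜 k := by
  constructor
  · exact fun h => gap_up hOCA h𝒜 hn hnk.le h
  · exact fun h => gap_down hOCA h𝒜 hn hnk.le h
end
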